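/- arXiv:1508.02940 — 9 statements merged into one kernel-verified Lean document; each statement's English description precedes it below -/
import Mathlib

section
/- Let n ≥ 1 and let a^T = [1, 2, …, n] be the 1×n row vector with entries 1 through n. If a^T = ã^T + u^T W is an affine TU decomposition with W ∈ {0,±1}^{k×n} (so that stacking ã^T on top of W yields a totally unimodular matrix), then k ≥ √n − 2. In particular the affine TU-dimension of a^T is at least √n − 2. -/
open Matrix

lemma sign_cases {z : ℤ} (h : z ∈ Set.range (SignType.cast : SignType → ℤ)) :
    z = -1 ∨ z = 0 ∨ z = 1 := by
  obtain ⟨s, rfl⟩ := h; cases s <;> simp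

lemma inj2 {α : Type*} {a b : α} (h : a ≠ b) : Function.Injective ![a, b] := by
  intro i j hij
  fin_cases i <;> fin_cases j <;> simp_all

lemma inj3 {α : Type*} {a b c : α} (hab : a ≠ b) (hac : a ≠ c) (hbc : b ≠ c) :
    Function.Injective ![a, b, c] := by
  intro i j hij
  fin_cases i <;> fin_cases j <;> simp_all

lemma lemA {m : ℕ} {ι : Type} (M : Matrix (Fin (m+1)) ι ℤ)
    (hM : M.IsTotallyUnimodular) (P : Finset (Fin m → ℤ))
    (h0 : ∀ x ∈ P, x ≠ 0)
    (h1 : ∀ x ∈ P, ∃ c, (fun i => M i c) = (Fin.snoc x 1 : Fin (m+1) → ℤ))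
    (h2 : ∀ x ∈ P, ∃ c, (fun i => M i c) = (Fin.snoc x 0 : Fin (m+1) → ℤ)) :
    P.card ≤ m := by
  classical
  have hcol : ∀ (x : Fin m → ℤ) (δ : ℤ) (c : ι),
      (fun i => M i c) = (Fin.snoc x δ : Fin (m+1) → ℤ) →
      (∀ s : Fin m, M s.castSucc c = x s) ∧ M (Fin.last m) c = δ := by
    intro x δ c hc
    constructor
    · intro s
      have := congrFun hc s.castSucc
      rwa [Fin.snoc_castSucc] at this
    · have := congrFun hc (Fin.last m)
      rwa [Fin.snoc_last] at this
  -- entries of elements of P are in {-1,0,1}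
  have hent : ∀ x ∈ P, ∀ s : Fin m, x s = -1 ∨ x s = 0 ∨ x s = 1 := by
    intro x hx s
    obtain ⟨c, hc⟩ := h1 x hx
    have h := sign_cases (hM.apply s.castSucc c)
    rwa [(hcol x 1 c hc).1 s] at h
  -- snoc-columns with the same last entry are distinct for distinct x
  have hsnocne : ∀ (x y : Fin m → ℤ) (δ : ℤ), x ≠ y →
      (Fin.snoc x δ : Fin (m+1) → ℤ) ≠ (Fin.snoc y δ : Fin (m+1) → ℤ) := by
    intro x y δ hxy h
    apply hxy
    funext i
    have := congrFun h i.castSucc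
    rwa [Fin.snoc_castSucc, Fin.snoc_castSucc] at this
  -- agreement on common support
  have hagree : ∀ x ∈ P, ∀ y ∈ P, ∀ s : Fin m, x s ≠ 0 → y s ≠ 0 → x s = y s := by
    intro x hx y hy s hxs hys
    by_cases hxy : x = y
    · rw [hxy]
    obtain ⟨cx, hcx⟩ := h1 x hx
    obtain ⟨cy, hcy⟩ := h1 y hy
    have hcxy : cx ≠ cy := by
      intro h
      exact hsnocne x y 1 hxy (by rw [← hcx, ← hcy, h])
    have hf : Function.Injective ![s.castSucc, Fin.last m] :=
      inj2 (ne_of_lt (Fin.castSucc_lt_last s))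
    have hdet := hM 2 ![s.castSucc, Fin.last m] ![cx, cy] hf (inj2 hcxy)
    rw [Matrix.det_fin_two] at hdet
    simp only [Matrix.submatrix_apply, Matrix.cons_val_zero, Matrix.cons_val_one,
      Matrix.head_cons] at hdet
    rw [(hcol x 1 cx hcx).1 s, (hcol x 1 cx hcx).2, (hcol y 1 cy hcy).1 s,
      (hcol y 1 cy hcy).2] at hdet
    have hxv := hent x hx s
    have hyv := hent y hy s
    rcases sign_cases hdet with h | h | h <;> omega
  -- the "star" property
  have hstar : ∀ x ∈ P, ∀ y ∈ P, ∀ z ∈ P,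
      (∀ s : Fin m, y s ≠ 0 → x s ≠ 0 → z s ≠ 0) ∨
      (∀ s : Fin m, z s ≠ 0 → x s ≠ 0 → y s ≠ 0) := by
    intro x hx y hy z hz
    by_contra hcon
    push_neg at hcon
    obtain ⟨⟨s, hys, hxs, hzs⟩, ⟨t, hzt, hxt, hyt⟩⟩ := hcon
    have hyz : y ≠ z := fun h => hys (h ▸ hzs)
    obtain ⟨cy, hcy⟩ := h1 y hy
    obtain ⟨cz, hcz⟩ := h1 z hz
    obtain ⟨cx, hcx⟩ := h2 x hx
    have hst : s ≠ t := fun h => hys (h ▸ hyt)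
    have hcyz : cy ≠ cz := fun h => hsnocne y z 1 hyz (by rw [← hcy, ← hcz, h])
    have hcyx : cy ≠ cx := by
      intro h
      have := congrFun (hcy.symm.trans (h ▸ hcx)) (Fin.last m)
      rw [Fin.snoc_last, Fin.snoc_last] at this
      exact one_ne_zero this
    have hczx : cz ≠ cx := by
      intro h
      have := congrFun (hcz.symm.trans (h ▸ hcx)) (Fin.last m)
      rw [Fin.snoc_last, Fin.snoc_last] at this
      exact one_ne_zero this
    have hfinj : Function.Injective ![s.castSucc, t.castSucc, Fin.last m] :=
      inj3 (fun h => hst (Fin.castSucc_injective _ h))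
        (ne_of_lt (Fin.castSucc_lt_last s)) (ne_of_lt (Fin.castSucc_lt_last t))
    have hdet := hM 3 ![s.castSucc, t.castSucc, Fin.last m] ![cy, cz, cx]
      hfinj (inj3 hcyz hcyx hczx)
    rw [Matrix.det_fin_three] at hdet
    simp only [Matrix.submatrix_apply, Matrix.cons_val_zero, Matrix.cons_val_one,
      Matrix.head_cons, Matrix.cons_val_two, Matrix.tail_cons, Matrix.head_fin_const] at hdet
    rw [(hcol y 1 cy hcy).1 s, (hcol y 1 cy hcy).1 t, (hcol y 1 cy hcy).2,
      (hcol z 1 cz hcz).1 s, (hcol z 1 cz hcz).1 t, (hcol z 1 cz hcz).2,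
      (hcol x 0 cx hcx).1 s, (hcol x 0 cx hcx).1 t, (hcol x 0 cx hcx).2] at hdet
    -- agreements
    have has : x s = y s := hagree x hx y hy s hxs hys
    have hat : x t = z t := hagree x hx z hz t hxt hzt
    rw [hzs, hyt, has, hat] at hdet
    have hys2 : y s = -1 ∨ y s = 1 := by rcases hent y hy s with h | h | h <;> simp_all
    have hzt2 : z t = -1 ∨ z t = 1 := by rcases hent z hz t with h | h | h <;> simp_all
    rcases hys2 with h1' | h1' <;> rcases hzt2 with h2' | h2' <;>
       rw [h1', h2'] at hdet <;> rcases sign_cases hdet with h | h | h <;> norm_num at h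
  -- for each x, pick a coordinate of its support avoiding all proper traces
  have hpick : ∀ x ∈ P, ∃ s : Fin m, x s ≠ 0 ∧
      ∀ y ∈ P, (∃ t, x t ≠ 0 ∧ y t = 0) → y s = 0 := by
    intro x hx
    set Q := P.filter (fun y => ∃ t, x t ≠ 0 ∧ y t = 0) with hQdef
    by_cases hQ : Q.Nonempty
    · obtain ⟨y0, hy0Q, hmax⟩ := Q.exists_max_image
        (fun y => (Finset.univ.filter (fun s => x s ≠ 0 ∧ y s ≠ 0)).card) hQ
      have hy0P : y0 ∈ P := (Finset.mem_filter.mp hy0Q).1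
      obtain ⟨t, hxt, hy0t⟩ := (Finset.mem_filter.mp hy0Q).2
      refine ⟨t, hxt, ?_⟩
      intro y hy hyproper
      by_contra hyt
      have hyQ : y ∈ Q := Finset.mem_filter.mpr ⟨hy, hyproper⟩
      rcases hstar x hx y hy y0 hy0P with hc | hc
      · exact (hc t hyt hxt) hy0t
      · have hsub : (Finset.univ.filter (fun s => x s ≠ 0 ∧ y0 s ≠ 0)) ⊆
            (Finset.univ.filter (fun s => x s ≠ 0 ∧ y s ≠ 0)) := by
          intro s hs
          simp only [Finset.mem_filter, Finset.mem_univ, true_and] at hs ⊢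
          exact ⟨hs.1, hc s hs.2 hs.1⟩
        have heq := Finset.eq_of_subset_of_card_le hsub (hmax y hyQ)
        have hmem : t ∈ (Finset.univ.filter (fun s => x s ≠ 0 ∧ y s ≠ 0)) := by
          simp only [Finset.mem_filter, Finset.mem_univ, true_and]
          exact ⟨hxt, hyt⟩
        rw [← heq] at hmem
        simp only [Finset.mem_filter, Finset.mem_univ, true_and] at hmem
        exact hmem.2 hy0t
    · obtain ⟨s, hs⟩ := Function.ne_iff.mp (h0 x hx)
      refine ⟨s, by simpa using hs, ?_⟩
      intro y hy hyproper
      exfalso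
      exact hQ ⟨y, Finset.mem_filter.mpr ⟨hy, hyproper⟩⟩
  choose f hf1 hf2 using hpick
  by_cases hP : P.Nonempty
  swap
  · simp [Finset.not_nonempty_iff_eq_empty.mp hP]
  obtain ⟨x0, hx0⟩ := hP
  have hne : Nonempty (Fin m) := ⟨f x0 hx0⟩
  have hinj : Set.InjOn (fun x => if h : x ∈ P then f x h else Classical.choice hne) P := by
    intro x hx' y hy' hgxy
    have hx : x ∈ P := hx'
    have hy : y ∈ P := hy'
    simp only [dif_pos hx, dif_pos hy] at hgxy
    have hxne : ∀ t, x t ≠ 0 → y t ≠ 0 := by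
      intro t hxt hyt
      have h0' := hf2 x hx y hy ⟨t, hxt, hyt⟩
      have h1' := hf1 y hy
      rw [← hgxy] at h1'
      exact h1' h0'
    have hyne : ∀ t, y t ≠ 0 → x t ≠ 0 := by
      intro t hyt hxt
      have h0' := hf2 y hy x hx ⟨t, hyt, hxt⟩
      have h1' := hf1 x hx
      rw [hgxy] at h1'
      exact h1' h0'
    funext t
    by_cases hxt : x t = 0
    · have : y t = 0 := by
        by_contra hyt
        exact (hyne t hyt) hxt
      rw [hxt, this]
    · exact hagree x hx y hy t hxt (hxne t hxt)
  have hcard := Finset.card_le_card_of_injOn _ (fun x _ => Finset.mem_univ _) hinj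
  simpa using hcard

/-- Scaling columns by ±1 and repeating/selecting columns preserves total unimodularity. -/
lemma tu_scale {r : ℕ} {ι κ : Type} (M : Matrix (Fin r) ι ℤ)
    (hM : M.IsTotallyUnimodular) (e : κ → ι) (ε : κ → ℤ)
    (hε : ∀ c, ε c = 1 ∨ ε c = -1) :
    (Matrix.of fun i c => ε c * M i (e c)).IsTotallyUnimodular := by
  rw [Matrix.isTotallyUnimodular_iff]
  intro k f g
  have hEq : (Matrix.of fun i c => ε c * M i (e c)).submatrix f g
      = (M.submatrix f (e ∘ g)) * Matrix.diagonal (fun j => ε (g j)) := by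
    ext i j
    rw [Matrix.mul_diagonal]
    simp [Matrix.submatrix, mul_comm]
  rw [hEq, Matrix.det_mul, Matrix.det_diagonal]
  have hprod : ∀ s : Finset (Fin k), (∏ j ∈ s, ε (g j)) = 1 ∨ (∏ j ∈ s, ε (g j)) = -1 := by
    intro s
    induction s using Finset.induction with
    | empty => left; simp
    | insert _ _ hns ih =>
      rw [Finset.prod_insert hns]
      rcases hε (g _) with h | h <;> rcases ih with h' | h' <;> rw [h, h'] <;> simp
  obtain ⟨s, hs⟩ := (Matrix.isTotallyUnimodular_iff M).mp hM k f (e ∘ g)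
  rcases hprod Finset.univ with h | h
  · rw [h, mul_one]; exact ⟨s, hs⟩
  · rw [h]; exact ⟨-s, by rw [← hs]; push_cast; ring⟩


theorem heller : ∀ (m : ℕ) (C : Finset (Fin m → ℤ)),
    (Matrix.of fun i (c : {v // v ∈ C}) => c.1 i).IsTotallyUnimodular →
    C.card ≤ m * m + m + 1 := by
  intro m
  induction m with
  | zero =>
    intro C _
    refine le_trans (Finset.card_le_one.mpr ?_) (by norm_num)
    intro a _ b _
    funext i
    exact i.elim0
  | succ m ih =>
    intro C hTU
    classical
    set π : (Fin (m+1) → ℤ) → (Fin m → ℤ) := fun v => v ∘ Fin.castSucc with hπ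
    set D := C.image π with hDdef
    -- the matrix of projected columns is TU
    have hsec : ∀ d : {v // v ∈ D}, ∃ c : {v // v ∈ C}, π c.1 = d.1 := by
      intro d
      obtain ⟨v, hvC, hvd⟩ := Finset.mem_image.mp d.2
      exact ⟨⟨v, hvC⟩, hvd⟩
    choose sec hsec' using hsec
    have hTUD : (Matrix.of fun i (d : {v // v ∈ D}) => d.1 i).IsTotallyUnimodular := by
      have heq : (Matrix.of fun i (d : {v // v ∈ D}) => d.1 i)
          = (Matrix.of fun i (c : {v // v ∈ C}) => c.1 i).submatrix Fin.castSucc sec := by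
        ext i d
        simp only [Matrix.submatrix_apply, Matrix.of_apply]
        rw [← hsec' d]
        rfl
      rw [heq]
      exact hTU.submatrix _ _
    have hDcard := ih D hTUD
    -- entries of columns are in {-1,0,1}
    have hent : ∀ v ∈ C, ∀ i, v i = -1 ∨ v i = 0 ∨ v i = 1 := by
      intro v hv i
      exact sign_cases (hTU.apply i ⟨v, hv⟩)
    -- elements of a fiber are snocs
    have hfib_eq : ∀ (b : Fin m → ℤ) (v : Fin (m+1) → ℤ), π v = b →
        v = Fin.snoc b (v (Fin.last m)) := by
      intro b v hv
      rw [← hv]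
      exact (Fin.snoc_init_self v).symm
    -- cannot have both last entries 1 and -1 over a nonzero base
    have hpm : ∀ b : Fin m → ℤ, b ≠ 0 →
        ¬ ((Fin.snoc b 1 : Fin (m+1) → ℤ) ∈ C ∧ (Fin.snoc b (-1) : Fin (m+1) → ℤ) ∈ C) := by
      rintro b hb ⟨hb1, hbm⟩
      obtain ⟨s, hs⟩ := Function.ne_iff.mp hb
      have hs' : b s ≠ 0 := by simpa using hs
      have hcne : (Fin.snoc b 1 : Fin (m+1) → ℤ) ≠ Fin.snoc b (-1) := by
        intro h
        have := congrFun h (Fin.last m)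
        rw [Fin.snoc_last, Fin.snoc_last] at this
        norm_num at this
      have hgne : (⟨Fin.snoc b 1, hb1⟩ : {v // v ∈ C}) ≠ ⟨Fin.snoc b (-1), hbm⟩ := by
        simpa [Subtype.ext_iff] using hcne
      have hdet := hTU 2 ![s.castSucc, Fin.last m] ![⟨Fin.snoc b 1, hb1⟩, ⟨Fin.snoc b (-1), hbm⟩]
        (inj2 (ne_of_lt (Fin.castSucc_lt_last s))) (inj2 hgne)
      rw [Matrix.det_fin_two] at hdet
      simp only [Matrix.submatrix_apply, Matrix.cons_val_zero, Matrix.cons_val_one,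
        Matrix.head_cons, Matrix.of_apply, Fin.snoc_castSucc, Fin.snoc_last] at hdet
      have hbv := hent _ hb1 s.castSucc
      rw [Fin.snoc_castSucc] at hbv
      rcases sign_cases hdet with h | h | h <;> omega
    -- members of the image of a fiber give snoc columns
    have hSmem : ∀ b : Fin m → ℤ, ∀ z : ℤ,
        z ∈ (C.filter (fun v => π v = b)).image (fun v => v (Fin.last m)) →
        (Fin.snoc b z : Fin (m+1) → ℤ) ∈ C := by
      intro b z hz
      obtain ⟨v, hv, hvz⟩ := Finset.mem_image.mp hz
      obtain ⟨hvC, hvb⟩ := Finset.mem_filter.mp hv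
      rw [← hvz, ← hfib_eq b v hvb]
      exact hvC
    set Pp := D.filter (fun b => b ≠ 0 ∧ (Fin.snoc b 1 : Fin (m+1) → ℤ) ∈ C ∧
        (Fin.snoc b 0 : Fin (m+1) → ℤ) ∈ C) with hPpdef
    set Pm := D.filter (fun b => b ≠ 0 ∧ (Fin.snoc b 0 : Fin (m+1) → ℤ) ∈ C ∧
        (Fin.snoc b (-1) : Fin (m+1) → ℤ) ∈ C) with hPmdef
    -- per-fiber bound
    have hkey : ∀ b ∈ D, (C.filter (fun v => π v = b)).card ≤
        1 + ((if b ∈ Pp then 1 else 0) + ((if b ∈ Pm then 1 else 0) +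
          (if b = 0 then 2 else 0))) := by
      intro b hbD
      set S := (C.filter (fun v => π v = b)).image (fun v => v (Fin.last m)) with hSdef
      have hcardS : (C.filter (fun v => π v = b)).card = S.card := by
        rw [hSdef]
        rw [Finset.card_image_of_injOn]
        intro v hv w hw hvw
        have hv' := (Finset.mem_filter.mp hv).2
        have hw' := (Finset.mem_filter.mp hw).2
        have hvw' : v (Fin.last m) = w (Fin.last m) := hvw
        rw [hfib_eq b v hv', hfib_eq b w hw', hvw']
      have hSsub : S ⊆ ({-1, 0, 1} : Finset ℤ) := by
        intro z hz
        obtain ⟨v, hv, hvz⟩ := Finset.mem_image.mp hz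
        have := hent v (Finset.mem_filter.mp hv).1 (Fin.last m)
        rw [hvz] at this
        simp only [Finset.mem_insert, Finset.mem_singleton]
        tauto
      rw [hcardS]
      by_cases hb0 : b = 0
      · have h3 : S.card ≤ 3 := le_trans (Finset.card_le_card hSsub) (by decide)
        split_ifs <;> omega
      · have hno : ¬ ((1:ℤ) ∈ S ∧ (-1:ℤ) ∈ S) := by
          rintro ⟨h1, h2⟩
          exact hpm b hb0 ⟨hSmem b 1 h1, hSmem b (-1) h2⟩
        have hsub2 : S ⊆ ({0, 1} : Finset ℤ) ∨ S ⊆ ({-1, 0} : Finset ℤ) := by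
          by_cases h1 : (1:ℤ) ∈ S
          · left
            intro z hz
            have hz3 := hSsub hz
            simp only [Finset.mem_insert, Finset.mem_singleton] at hz3 ⊢
            rcases hz3 with h | h | h
            · exact absurd ⟨h1, h ▸ hz⟩ hno
            · exact Or.inl h
            · exact Or.inr h
          · right
            intro z hz
            have hz3 := hSsub hz
            simp only [Finset.mem_insert, Finset.mem_singleton] at hz3 ⊢
            rcases hz3 with h | h | h
            · exact Or.inl h
            · exact Or.inr h
            · exact absurd (h ▸ hz) h1
        have h2 : S.card ≤ 2 := by
          rcases hsub2 with h | h <;> exact le_trans (Finset.card_le_card h) (by decide)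
        by_cases hc1 : S.card ≤ 1
        · split_ifs <;> omega
        · -- S.card = 2, so S is exactly {0,1} or {-1,0}
          have hPmem : b ∈ Pp ∨ b ∈ Pm := by
            rcases hsub2 with h | h
            · left
              have hc2 : ({0, 1} : Finset ℤ).card = 2 := by decide
              have hSeq : S = ({0, 1} : Finset ℤ) :=
                Finset.eq_of_subset_of_card_le h (by omega)
              rw [hPpdef, Finset.mem_filter]
              refine ⟨hbD, hb0, ?_, ?_⟩
              · exact hSmem b 1 (by rw [← hSdef, hSeq]; decide)
              · exact hSmem b 0 (by rw [← hSdef, hSeq]; decide)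
            · right
              have hc2 : ({-1, 0} : Finset ℤ).card = 2 := by decide
              have hSeq : S = ({-1, 0} : Finset ℤ) :=
                Finset.eq_of_subset_of_card_le h (by omega)
              rw [hPmdef, Finset.mem_filter]
              refine ⟨hbD, hb0, ?_, ?_⟩
              · exact hSmem b 0 (by rw [← hSdef, hSeq]; decide)
              · exact hSmem b (-1) (by rw [← hSdef, hSeq]; decide)
          rcases hPmem with h | h <;> split_ifs <;> omega
    -- bound Pp via lemA
    have hPp : Pp.card ≤ m := by
      apply lemA (Matrix.of fun i (c : {v // v ∈ C}) => c.1 i) hTU Pp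
      · intro x hx
        exact (Finset.mem_filter.mp hx).2.1
      · intro x hx
        exact ⟨⟨Fin.snoc x 1, (Finset.mem_filter.mp hx).2.2.1⟩, rfl⟩
      · intro x hx
        exact ⟨⟨Fin.snoc x 0, (Finset.mem_filter.mp hx).2.2.2⟩, rfl⟩
    -- bound Pm via lemA applied to the column-negated matrix
    have hnegsnoc : ∀ (x : Fin m → ℤ) (δ : ℤ) (i : Fin (m+1)),
        -((Fin.snoc x δ : Fin (m+1) → ℤ) i) = (Fin.snoc (-x) (-δ) : Fin (m+1) → ℤ) i := by
      intro x δ i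
      induction i using Fin.lastCases with
      | last => simp
      | cast s => simp
    have hPm : Pm.card ≤ m := by
      have hN := tu_scale (Matrix.of fun i (c : {v // v ∈ C}) => c.1 i) hTU
        (Sum.elim id id : {v // v ∈ C} ⊕ {v // v ∈ C} → {v // v ∈ C})
        (Sum.elim (fun _ => 1) (fun _ => -1)) (by rintro (c | c) <;> simp)
      have hcard : (Pm.image (fun x => -x)).card = Pm.card :=
        Finset.card_image_of_injective _ neg_injective
      rw [← hcard]
      apply lemA _ hN (Pm.image (fun x => -x))
      · intro y hy
        obtain ⟨x, hx, rfl⟩ := Finset.mem_image.mp hy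
        exact neg_ne_zero.mpr (Finset.mem_filter.mp hx).2.1
      · intro y hy
        obtain ⟨x, hx, rfl⟩ := Finset.mem_image.mp hy
        refine ⟨Sum.inr ⟨Fin.snoc x (-1), (Finset.mem_filter.mp hx).2.2.2⟩, ?_⟩
        funext i
        simp only [Matrix.of_apply, Sum.elim_inr, id_eq]
        rw [neg_one_mul, hnegsnoc x (-1) i]
        norm_num
      · intro y hy
        obtain ⟨x, hx, rfl⟩ := Finset.mem_image.mp hy
        refine ⟨Sum.inr ⟨Fin.snoc x 0, (Finset.mem_filter.mp hx).2.2.1⟩, ?_⟩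
        funext i
        simp only [Matrix.of_apply, Sum.elim_inr, id_eq]
        rw [neg_one_mul, hnegsnoc x 0 i]
        norm_num
    -- assemble the count
    have hPpD : D.filter (fun b => b ∈ Pp) = Pp := by
      ext b
      simp only [Finset.mem_filter]
      exact ⟨fun h => h.2, fun h => ⟨(Finset.mem_filter.mp h).1, h⟩⟩
    have hPmD : D.filter (fun b => b ∈ Pm) = Pm := by
      ext b
      simp only [Finset.mem_filter]
      exact ⟨fun h => h.2, fun h => ⟨(Finset.mem_filter.mp h).1, h⟩⟩
    have hsPp : (∑ b ∈ D, if b ∈ Pp then (1:ℕ) else 0) = Pp.card := by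
      rw [Finset.sum_boole, hPpD, Nat.cast_id]
    have hsPm : (∑ b ∈ D, if b ∈ Pm then (1:ℕ) else 0) = Pm.card := by
      rw [Finset.sum_boole, hPmD, Nat.cast_id]
    have hs0 : (∑ b ∈ D, if b = 0 then (2:ℕ) else 0) ≤ 2 := by
      rw [Finset.sum_ite_eq' D (0 : Fin m → ℤ) (fun _ => (2:ℕ))]
      split_ifs <;> omega
    have hfinal : C.card ≤ D.card + (Pp.card + (Pm.card + 2)) := by
      calc C.card = ∑ b ∈ D, (C.filter (fun v => π v = b)).card :=
            Finset.card_eq_sum_card_image π C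
        _ ≤ ∑ b ∈ D, (1 + ((if b ∈ Pp then 1 else 0) + ((if b ∈ Pm then 1 else 0) +
              (if b = 0 then 2 else 0)))) := Finset.sum_le_sum hkey
        _ = D.card + ((∑ b ∈ D, if b ∈ Pp then (1:ℕ) else 0) +
              ((∑ b ∈ D, if b ∈ Pm then (1:ℕ) else 0) +
               (∑ b ∈ D, if b = 0 then (2:ℕ) else 0))) := by
            rw [Finset.sum_add_distrib, Finset.sum_add_distrib, Finset.sum_add_distrib,
              Finset.sum_const, smul_eq_mul, mul_one]
        _ ≤ D.card + (Pp.card + (Pm.card + 2)) := by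
            rw [hsPp, hsPm]
            omega
    have hexp : (m+1) * (m+1) + (m+1) + 1 = (m*m + m + 1) + (m + (m + 2)) := by ring
    omega

open Matrix Set

/-- **Lower bound on the affine TU-dimension of the master knapsack vector.**
If the row vector `aᵀ = [1, 2, …, n]` admits a `k`-row affine TU decomposition
`aᵀ = ãᵀ + uᵀ W`, then `k ≥ √n - 2`. -/
theorem master_knapsack_affine_TU_dimension_lower_bound
    (n : ℕ) (hn : 1 ≤ n) (a : Fin n → ℤ) (ha : ∀ j, a j = (j : ℕ) + 1)
    (k : ℕ) (atilde : Fin n → ℤ) (u : Fin k → ℤ) (W : Matrix (Fin k) (Fin n) ℤ)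
    (hatilde : ∀ j, atilde j ∈ ({-1, 0, 1} : Set ℤ))
    (hW : ∀ i j, W i j ∈ ({-1, 0, 1} : Set ℤ))
    (hdecomp : ∀ j, a j = atilde j + Matrix.vecMul u W j)
    (hTU : (Matrix.fromRows (Matrix.of fun (_ : Fin 1) j => atilde j) W).IsTotallyUnimodular) :
    Real.sqrt n - 2 ≤ (k : ℝ) := by
  classical
  set S : Matrix (Fin (1+k)) (Fin n) ℤ :=
    (Matrix.fromRows (Matrix.of fun (_ : Fin 1) j => atilde j) W).submatrix
      finSumFinEquiv.symm id with hS
  have hSTU : S.IsTotallyUnimodular := hTU.submatrix _ _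
  set col : Fin n → (Fin (1+k) → ℤ) := fun j i => S i j with hcol
  have hcolinj : Function.Injective col := by
    intro j j' hjj'
    have hat : atilde j = atilde j' := by
      have h := congrFun hjj' (finSumFinEquiv (Sum.inl 0))
      simp only [hcol, hS, Matrix.submatrix_apply, id_eq, Equiv.symm_apply_apply,
        Matrix.fromRows_apply_inl, Matrix.of_apply] at h
      exact h
    have hWc : ∀ i, W i j = W i j' := by
      intro i
      have h := congrFun hjj' (finSumFinEquiv (Sum.inr i))
      simp only [hcol, hS, Matrix.submatrix_apply, id_eq, Equiv.symm_apply_apply,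
        Matrix.fromRows_apply_inr] at h
      exact h
    have haj : a j = a j' := by
      rw [hdecomp j, hdecomp j', hat]
      congr 1
      simp only [Matrix.vecMul, dotProduct]
      exact Finset.sum_congr rfl fun i _ => by rw [hWc i]
    rw [ha j, ha j'] at haj
    have hjn : (j : ℕ) = (j' : ℕ) := by exact_mod_cast add_right_cancel haj
    exact Fin.ext hjn
  set C : Finset (Fin (1+k) → ℤ) := Finset.univ.image col with hC
  have hCcard : C.card = n := by
    rw [hC, Finset.card_image_of_injective _ hcolinj, Finset.card_univ, Fintype.card_fin]
  have hsec : ∀ c : {v // v ∈ C}, ∃ j : Fin n, col j = c.1 := by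
    intro c
    obtain ⟨j, _, hj⟩ := Finset.mem_image.mp c.2
    exact ⟨j, hj⟩
  choose sec hsec' using hsec
  have hCTU : (Matrix.of fun i (c : {v // v ∈ C}) => c.1 i).IsTotallyUnimodular := by
    have heq : (Matrix.of fun i (c : {v // v ∈ C}) => c.1 i) = S.submatrix id sec := by
      ext i c
      simp only [Matrix.submatrix_apply, Matrix.of_apply, id_eq]
      rw [← hsec' c]
    rw [heq]
    exact hSTU.submatrix _ _
  have hn2 := heller (1+k) C hCTU
  rw [hCcard] at hn2
  have hineq : n ≤ (k+2)*(k+2) := by nlinarith [hn2]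
  have h1 : (n : ℝ) ≤ ((k:ℝ)+2)^2 := by
    calc (n:ℝ) ≤ (((k+2)*(k+2) : ℕ) : ℝ) := by exact_mod_cast hineq
      _ = ((k:ℝ)+2)^2 := by push_cast; ring
  have h2 : Real.sqrt n ≤ (k:ℝ) + 2 := by
    rw [show (k:ℝ)+2 = Real.sqrt (((k:ℝ)+2)^2) by rw [Real.sqrt_sq (by positivity)]]
    exact Real.sqrt_le_sqrt h1
  linarith
end

section
/- Let n ≥ 1 and a^T = [2, 2², …, 2ⁿ]. Then the affine TU-dimension of a^T is exactly n: a^T admits an n-row affine TU decomposition (with W the identity matrix), but for every k < n there is no k-row affine TU decomposition of a^T; i.e., there exist no ã ∈ {0,±1}^n, u ∈ ℤ^k, and W ∈ {0,±1}^{k×n} with k < n such that a^T = ã^T + u^T W and the stacking of ã^T on top of W is totally unimodular. -/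
open Matrix Set

section AuxLemmas
open Finset

lemma pow2_sum_eq_zero {ι : Type*} [DecidableEq ι] (s : Finset ι) :
    ∀ e : ι → ℕ, Set.InjOn e s → ∀ c : ι → ℚ,
    (∀ j ∈ s, c j = -1 ∨ c j = 0 ∨ c j = 1) →
    ∑ j ∈ s, c j * 2 ^ e j = 0 → ∀ j ∈ s, c j = 0 := by
  induction s using Finset.strongInduction with
  | _ s ih =>
    intro e he c hc hsum j hj
    obtain ⟨b, hb, hmax⟩ := Finset.exists_max_image s e ⟨j, hj⟩
    have hcb : c b = 0 := by
      by_contra h0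
      have habs : |c b| = 1 := by rcases hc b hb with h | h | h <;> simp [h] at h0 ⊢
      have h1 : c b * 2 ^ e b = -∑ x ∈ s.erase b, c x * 2 ^ e x := by
        have h := Finset.add_sum_erase s (fun x => c x * 2 ^ e x) hb
        linarith [hsum, h]
      have h2 : (2:ℚ) ^ e b = |∑ x ∈ s.erase b, c x * 2 ^ e x| := by
        rw [← abs_neg, ← h1, abs_mul, habs, one_mul, abs_of_pos (by positivity)]
      have h3 : |∑ x ∈ s.erase b, c x * 2 ^ e x| ≤ ∑ x ∈ s.erase b, (2:ℚ) ^ e x := by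
        refine (Finset.abs_sum_le_sum_abs _ _).trans (Finset.sum_le_sum fun x hx => ?_)
        have hx' : x ∈ s := Finset.mem_of_mem_erase hx
        rw [abs_mul, abs_of_pos (show (0:ℚ) < 2 ^ e x by positivity)]
        rcases hc x hx' with h | h | h <;> simp [h] <;> positivity
      have h4 : ∑ x ∈ s.erase b, (2:ℚ) ^ e x = ∑ d ∈ (s.erase b).image e, (2:ℚ) ^ d := by
        rw [Finset.sum_image]
        intro x hx y hy hxy
        exact he (Finset.mem_of_mem_erase hx) (Finset.mem_of_mem_erase hy) hxy
      have h5 : (s.erase b).image e ⊆ Finset.range (e b) := by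
        intro d hd
        obtain ⟨x, hx, rfl⟩ := Finset.mem_image.mp hd
        rw [Finset.mem_range]
        have hle := hmax x (Finset.mem_of_mem_erase hx)
        have hne : e x ≠ e b := fun hh =>
          (Finset.ne_of_mem_erase hx) (he (Finset.mem_of_mem_erase hx) hb hh)
        omega
      have h6 : ∑ d ∈ (s.erase b).image e, (2:ℚ) ^ d ≤ ∑ d ∈ Finset.range (e b), (2:ℚ) ^ d :=
        Finset.sum_le_sum_of_subset_of_nonneg h5 (fun d _ _ => by positivity)
      have h7 : ∑ d ∈ Finset.range (e b), (2:ℚ) ^ d = 2 ^ e b - 1 := by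
        rw [geom_sum_eq (by norm_num)]
        norm_num
      rw [h4] at h3
      linarith [h2, h3, h6, h7]
    rcases eq_or_ne j b with rfl | hjb
    · exact hcb
    · refine ih (s.erase b) (Finset.erase_ssubset hb) e
        (he.mono (by simp [Finset.coe_subset, Finset.erase_subset])) c
        (fun x hx => hc x (Finset.mem_of_mem_erase hx)) ?_ j (Finset.mem_erase.mpr ⟨hjb, hj⟩)
      have h := Finset.add_sum_erase s (fun x => c x * 2 ^ e x) hb
      simp only [hcb, zero_mul, zero_add] at h
      linarith [hsum, h]

lemma snoc_inj {n m : ℕ} {g : Fin n → Fin m} (hg : Function.Injective g) {x : Fin m}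
    (hx : ∀ i, g i ≠ x) : Function.Injective (Fin.snoc g x : Fin (n+1) → Fin m) := by
  intro i j hij
  induction i using Fin.lastCases with
  | last =>
    induction j using Fin.lastCases with
    | last => rfl
    | cast j =>
      rw [Fin.snoc_last, Fin.snoc_castSucc] at hij
      exact absurd hij.symm (hx j)
  | cast i =>
    induction j using Fin.lastCases with
    | last =>
      rw [Fin.snoc_last, Fin.snoc_castSucc] at hij
      exact absurd hij (hx i)
    | cast j =>
      rw [Fin.snoc_castSucc, Fin.snoc_castSucc] at hij
      exact congrArg Fin.castSucc (hg hij)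

lemma zero_tu {m' n' : Type*} : (0 : Matrix m' n' ℤ).IsTotallyUnimodular := by
  intro k f g _ _
  cases k with
  | zero => exact ⟨1, by simp⟩
  | succ k =>
    refine ⟨0, ?_⟩
    rw [SignType.coe_zero, eq_comm]
    exact Matrix.det_eq_zero_of_row_eq_zero 0 (fun j => rfl)

lemma tu_map_rat {m' n' : Type*} {A : Matrix m' n' ℤ} (hA : A.IsTotallyUnimodular) :
    (A.map (Int.cast : ℤ → ℚ)).IsTotallyUnimodular := by
  intro k f g hf hg
  obtain ⟨s, hs⟩ := hA k f g hf hg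
  refine ⟨s, ?_⟩
  have h1 : (A.map (Int.cast : ℤ → ℚ)).submatrix f g
      = ((Int.castRingHom ℚ).mapMatrix (A.submatrix f g) : Matrix (Fin k) (Fin k) ℚ) := rfl
  rw [h1, ← RingHom.map_det, ← hs]
  cases s <;> simp

lemma rows_dep {n : ℕ} : ∀ (r : ℕ) (M : Matrix (Fin (r+1)) (Fin n) ℚ),
    (∀ g : Fin (r+1) → Fin n, Function.Injective g → (M.submatrix id g).det = 0) →
    ∃ c : Fin (r+1) → ℚ, c ≠ 0 ∧ ∀ j, ∑ i, c i * M i j = 0 := by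
  intro r
  induction r with
  | zero =>
    intro M h
    refine ⟨fun _ => 1, fun hcon => by simpa using congrFun hcon 0, fun j => ?_⟩
    have := h (fun _ => j) (fun a b _ => Fin.fin_one_eq_zero a ▸ (Fin.fin_one_eq_zero b).symm ▸ rfl)
    rw [Matrix.det_fin_one] at this
    simpa using this
  | succ r ih =>
    intro M h
    by_cases hA : ∃ g : Fin (r+1) → Fin n, Function.Injective g ∧
        (M.submatrix Fin.castSucc g).det ≠ 0
    · obtain ⟨g, hg, hdet⟩ := hA
      refine ⟨fun i => (-1)^((i:ℕ) + (r+1)) * (M.submatrix i.succAbove g).det, ?_, ?_⟩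
      · intro hcon
        have hl := congrFun hcon (Fin.last (r+1))
        simp only [Fin.val_last, Pi.zero_apply, mul_eq_zero] at hl
        rcases hl with hl | hl
        · have := pow_ne_zero ((r+1)+(r+1)) (by norm_num : (-1:ℚ) ≠ 0)
          exact this hl
        · rw [Fin.succAbove_last] at hl
          exact hdet hl
      · intro j
        have hdetN : (M.submatrix id (Fin.snoc g j)).det = 0 := by
          by_cases hj : ∃ x, g x = j
          · obtain ⟨x, hx⟩ := hj
            refine Matrix.det_zero_of_column_eq (show x.castSucc ≠ Fin.last (r+1) from ?_) ?_
            · exact Fin.ne_of_lt x.castSucc_lt_last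
            · intro i
              simp [Fin.snoc_castSucc, Fin.snoc_last, hx]
          · exact h _ (snoc_inj hg (not_exists.mp hj))
        have heq : ∀ i : Fin (r+2),
            (-1:ℚ)^((i:ℕ) + ((Fin.last (r+1) : Fin (r+2)):ℕ))
              * (M.submatrix id (Fin.snoc g j)) i (Fin.last (r+1))
              * ((M.submatrix id (Fin.snoc g j)).submatrix i.succAbove
                  (Fin.last (r+1)).succAbove).det
            = ((-1)^((i:ℕ) + (r+1)) * (M.submatrix i.succAbove g).det) * M i j := by
          intro i
          have e1 : (M.submatrix id (Fin.snoc g j)) i (Fin.last (r+1)) = M i j := by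
            simp [Fin.snoc_last]
          have e2 : (M.submatrix id (Fin.snoc g j)).submatrix i.succAbove
              (Fin.last (r+1)).succAbove = M.submatrix i.succAbove g := by
            rw [Fin.succAbove_last]
            ext a b
            simp [Fin.snoc_castSucc]
          rw [e1, e2]
          simp only [Fin.val_last]
          ring
        show (∑ i : Fin (r+2), ((-1:ℚ)^((i:ℕ) + (r+1)) * (M.submatrix i.succAbove g).det) * M i j) = 0
        rw [← hdetN, Matrix.det_succ_column _ (Fin.last (r+1))]
        exact (Finset.sum_congr rfl fun i _ => heq i).symm
    · push_neg at hA
      obtain ⟨c', hc'0, hc'⟩ := ih (M.submatrix Fin.castSucc id) (by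
        intro g hg
        rw [Matrix.submatrix_submatrix]
        simpa using hA g hg)
      refine ⟨Fin.snoc c' 0, ?_, ?_⟩
      · intro hcon
        obtain ⟨i', hi'⟩ := Function.ne_iff.mp hc'0
        apply hi'
        have := congrFun hcon i'.castSucc
        simpa [Fin.snoc_castSucc] using this
      · intro j
        rw [Fin.sum_univ_castSucc]
        simp only [Fin.snoc_castSucc, Fin.snoc_last, zero_mul, add_zero]
        simpa using hc' j

lemma drop_row {n r : ℕ} (M : Matrix (Fin (r+1)) (Fin n) ℚ) (v c : Fin (r+1) → ℚ)
    (hv : ∀ j : Fin n, (2:ℚ)^((j:ℕ)+1) = ∑ i, v i * M i j)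
    (hc0 : c ≠ 0) (hc : ∀ j, ∑ i, c i * M i j = 0) :
    ∃ i0 : Fin (r+1), ∀ j : Fin n, (2:ℚ)^((j:ℕ)+1) =
      ∑ i, (v (i0.succAbove i) - v i0 / c i0 * c (i0.succAbove i)) * M (i0.succAbove i) j := by
  obtain ⟨i0, hi0⟩ := Function.ne_iff.mp hc0
  refine ⟨i0, fun j => ?_⟩
  have h1 := hv j
  have h2 := hc j
  rw [Fin.sum_univ_succAbove _ i0] at h1 h2
  have expand : ∑ i, (v (i0.succAbove i) - v i0 / c i0 * c (i0.succAbove i)) * M (i0.succAbove i) j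
      = ∑ i, v (i0.succAbove i) * M (i0.succAbove i) j
        - v i0 / c i0 * ∑ i, c (i0.succAbove i) * M (i0.succAbove i) j := by
    rw [Finset.mul_sum, ← Finset.sum_sub_distrib]
    exact Finset.sum_congr rfl fun i _ => by ring
  rw [expand]
  have hkey : v i0 / c i0 * c i0 = v i0 := div_mul_cancel₀ _ hi0
  have h2' : ∑ i, c (i0.succAbove i) * M (i0.succAbove i) j = -(c i0 * M i0 j) := by linarith
  rw [h2']
  have : v i0 / c i0 * -(c i0 * M i0 j) = -(v i0 * M i0 j) := by
    rw [mul_neg, ← mul_assoc, hkey]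
  rw [this]
  linarith

lemma no_small_TU_rep {n : ℕ} : ∀ (r : ℕ), r < n →
    ∀ M : Matrix (Fin r) (Fin n) ℚ, M.IsTotallyUnimodular →
    ∀ v : Fin r → ℚ, (∀ j : Fin n, (2:ℚ) ^ ((j:ℕ)+1) = ∑ i, v i * M i j) → False := by
  intro r
  induction r with
  | zero =>
    intro h M _ v hv
    have := hv ⟨0, h⟩
    simpa using this
  | succ r ih =>
    intro hrn M hM v hv
    have step1 : ∀ h' : Fin (r+1) → Fin n, Function.Injective h' →
        (M.submatrix id h').det = 0 := by
      intro h' hinj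
      obtain ⟨x, hx⟩ : ∃ x : Fin n, ∀ i, h' i ≠ x := by
        by_contra hcon
        push_neg at hcon
        have hsurj : Function.Surjective h' := fun x => hcon x
        have := Fintype.card_le_of_surjective h' hsurj
        simp only [Fintype.card_fin] at this
        omega
      have hginj : Function.Injective (Fin.snoc h' x : Fin (r+2) → Fin n) := snoc_inj hinj hx
      set g : Fin (r+2) → Fin n := Fin.snoc h' x with hgdef
      set N : Matrix (Fin (r+2)) (Fin (r+2)) ℚ :=
        Matrix.of fun i j => Fin.cases ((2:ℚ) ^ ((g j : ℕ)+1)) (fun i' => M i' (g j)) i with hNdef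
      have hdetN : N.det = 0 := by
        rw [← Matrix.exists_vecMul_eq_zero_iff]
        refine ⟨Fin.cases 1 (fun i' => -v i'), ?_, ?_⟩
        · intro hcon
          have := congrFun hcon 0
          simp at this
        · funext j
          simp only [Matrix.vecMul, dotProduct, Pi.zero_apply]
          rw [Fin.sum_univ_succ]
          simp only [hNdef, Matrix.of_apply, Fin.cases_zero, Fin.cases_succ, one_mul]
          have := hv (g j)
          have hsum : ∑ i : Fin (r+1), -v i * M i (g j) = -∑ i : Fin (r+1), v i * M i (g j) := by
            rw [← Finset.sum_neg_distrib]
            exact Finset.sum_congr rfl fun i _ => by ring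
          rw [hsum, ← this]
          ring
      rw [Matrix.det_succ_row_zero] at hdetN
      have hterm : ∀ j : Fin (r+2),
          (-1:ℚ)^(j:ℕ) * N 0 j * (N.submatrix Fin.succ j.succAbove).det
          = ((-1:ℚ)^(j:ℕ) * (M.submatrix id (g ∘ j.succAbove)).det) * 2 ^ ((g j : ℕ)+1) := by
        intro j
        have e1 : N 0 j = (2:ℚ) ^ ((g j : ℕ)+1) := by simp [hNdef]
        have e2 : N.submatrix Fin.succ j.succAbove = M.submatrix id (g ∘ j.succAbove) := by
          ext a b
          simp [hNdef]
        rw [e1, e2]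
        ring
      rw [Finset.sum_congr rfl (fun j _ => hterm j)] at hdetN
      have hall := pow2_sum_eq_zero Finset.univ (fun j => (g j : ℕ) + 1)
        (fun j₁ _ j₂ _ hj => hginj (Fin.val_injective (by simpa using hj)))
        (fun j => (-1:ℚ)^(j:ℕ) * (M.submatrix id (g ∘ j.succAbove)).det)
        (fun j _ => by
          beta_reduce
          obtain ⟨s, hs⟩ := hM (r+1) id (g ∘ j.succAbove) Function.injective_id
            (hginj.comp (Fin.succAbove_right_injective))
          rw [← hs]
          rcases neg_one_pow_eq_or ℚ (j:ℕ) with hp | hp <;> rw [hp] <;> cases s <;> simp)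
        hdetN
      have hlast := hall (Fin.last (r+1)) (Finset.mem_univ _)
      rw [mul_eq_zero] at hlast
      rcases hlast with hl | hl
      · exact absurd hl (pow_ne_zero _ (by norm_num))
      · have : g ∘ (Fin.last (r+1)).succAbove = h' := by
          funext t
          rw [Fin.succAbove_last]
          simp [hgdef, Fin.snoc_castSucc]
        rwa [this] at hl
    obtain ⟨c, hc0, hc⟩ := rows_dep r M step1
    obtain ⟨i0, hrep⟩ := drop_row M v c hv hc0 hc
    exact ih (by omega) (M.submatrix i0.succAbove id)
      (hM.submatrix _ _) _ (fun j => by simpa using hrep j)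
lemma fcases_inj {k : ℕ} :
    Function.Injective (Fin.cases (Sum.inl 0) Sum.inr : Fin (k+1) → Fin 1 ⊕ Fin k) := by
  intro i j hij
  induction i using Fin.cases with
  | zero =>
    induction j using Fin.cases with
    | zero => rfl
    | succ j' => simp at hij
  | succ i' =>
    induction j using Fin.cases with
    | zero => simp at hij
    | succ j' =>
      simp only [Fin.cases_succ] at hij
      exact congrArg Fin.succ (Sum.inr_injective hij)

end AuxLemmas

/-- **The affine TU-dimension of `[2, 2², …, 2ⁿ]` is exactly `n`.**
The vector admits an `n`-row affine TU decomposition with `W` the identity matrix,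
but admits no `k`-row affine TU decomposition for any `k < n`. -/
theorem powers_of_two_affine_TU_dimension_eq_n
    (n : ℕ) (hn : 1 ≤ n) (a : Fin n → ℤ) (ha : ∀ j, a j = 2 ^ ((j : ℕ) + 1)) :
    (∃ (atilde : Fin n → ℤ) (u : Fin n → ℤ),
      (∀ j, atilde j ∈ ({-1, 0, 1} : Set ℤ)) ∧
      (∀ j, a j = atilde j + Matrix.vecMul u (1 : Matrix (Fin n) (Fin n) ℤ) j) ∧
      (Matrix.fromRows (Matrix.of fun (_ : Fin 1) j => atilde j)
        (1 : Matrix (Fin n) (Fin n) ℤ)).IsTotallyUnimodular)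
    ∧
    ∀ k < n, ¬ ∃ (atilde : Fin n → ℤ) (u : Fin k → ℤ) (W : Matrix (Fin k) (Fin n) ℤ),
      (∀ j, atilde j ∈ ({-1, 0, 1} : Set ℤ)) ∧
      (∀ i j, W i j ∈ ({-1, 0, 1} : Set ℤ)) ∧
      (∀ j, a j = atilde j + Matrix.vecMul u W j) ∧
      (Matrix.fromRows (Matrix.of fun (_ : Fin 1) j => atilde j) W).IsTotallyUnimodular := by
  constructor
  · refine ⟨fun _ => 0, a, fun j => by simp, fun j => by rw [Matrix.vecMul_one]; ring, ?_⟩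
    have h0 : (Matrix.of fun (_ : Fin 1) (j : Fin n) => ((fun _ => (0:ℤ)) j : ℤ))
        = (0 : Matrix (Fin 1) (Fin n) ℤ) := rfl
    rw [h0, Matrix.fromRows_one_isTotallyUnimodular_iff]
    exact zero_tu
  · rintro k hkn ⟨atilde, u, W, hat, hW, heq, hTU⟩
    -- the stacked matrix reindexed with rows `Fin (k+1)`
    set f : Fin (k+1) → Fin 1 ⊕ Fin k := Fin.cases (Sum.inl 0) Sum.inr with hfdef
    set Mz : Matrix (Fin (k+1)) (Fin n) ℤ :=
      (Matrix.fromRows (Matrix.of fun (_ : Fin 1) j => atilde j) W).submatrix f id with hMzdef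
    have hTUz : Mz.IsTotallyUnimodular := hTU.submatrix f id
    set vz : Fin (k+1) → ℤ := Fin.cases 1 u with hvzdef
    have hkey : ∀ j, ∑ i, vz i * Mz i j = a j := by
      intro j
      rw [Fin.sum_univ_succ]
      have h0 : Mz 0 j = atilde j := by
        simp [hMzdef, hfdef]
      have hsucc : ∀ i : Fin k, Mz i.succ j = W i j := by
        intro i
        simp [hMzdef, hfdef]
      rw [heq j]
      simp only [h0, hvzdef, Fin.cases_zero, one_mul, Fin.cases_succ]
      rw [Finset.sum_congr rfl (fun i _ => by rw [hsucc i])]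
      simp [Matrix.vecMul, dotProduct]
    -- rational version
    set Mq : Matrix (Fin (k+1)) (Fin n) ℚ := Mz.map (Int.cast : ℤ → ℚ) with hMqdef
    have hTUq : Mq.IsTotallyUnimodular := tu_map_rat hTUz
    have hkeyq : ∀ j : Fin n, (2:ℚ) ^ ((j:ℕ)+1) = ∑ i, ((vz i : ℤ) : ℚ) * Mq i j := by
      intro j
      have hcast : ∑ i, ((vz i : ℤ) : ℚ) * Mq i j = ((∑ i, vz i * Mz i j : ℤ) : ℚ) := by
        push_cast [hMqdef, Matrix.map_apply]
        rfl
      rw [hcast, hkey j, ha j]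
      push_cast
      ring
    rcases lt_or_eq_of_le (Nat.succ_le_of_lt hkn) with hlt | heqn
    · exact no_small_TU_rep (k+1) hlt Mq hTUq _ hkeyq
    · -- square case
      set e : Fin n ≃ Fin (k+1) := finCongr heqn.symm with hedef
      have hmod2 : ∀ dd : ℤ, (Mz.submatrix (⇑e) id).det = dd →
          (dd = (1:ℤ) ∨ dd = (-1:ℤ)) → False := by
        intro dd hdet hdd
        set S2 : Matrix (Fin n) (Fin n) (ZMod 2) :=
          (Int.castRingHom (ZMod 2)).mapMatrix (Mz.submatrix (⇑e) id) with hS2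
        have hdet2 : S2.det = 1 := by
          rw [hS2, ← RingHom.map_det, hdet]
          rcases hdd with h | h <;> rw [h] <;> decide
        have hker : (fun x => ((vz (e x) : ℤ) : ZMod 2)) ᵥ* S2 = 0 := by
          funext j
          have hcast : ∑ x : Fin n, ((vz (e x) : ℤ) : ZMod 2) * ((Mz (e x) j : ℤ) : ZMod 2)
              = ((∑ x : Fin n, vz (e x) * Mz (e x) j : ℤ) : ZMod 2) := by
            push_cast
            rfl
          have hsum : ∑ x : Fin n, vz (e x) * Mz (e x) j = a j := by
            rw [Equiv.sum_comp e (fun i => vz i * Mz i j)]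
            exact hkey j
          simp only [Matrix.vecMul, dotProduct, Pi.zero_apply, hS2,
            RingHom.mapMatrix_apply, Matrix.map_apply, Matrix.submatrix_apply, id,
            Int.coe_castRingHom]
          rw [hcast, hsum, ha j]
          push_cast
          rw [show ((2:ZMod 2)) = 0 by decide, zero_pow (Nat.succ_ne_zero _)]
        have hne : (fun x => ((vz (e x) : ℤ) : ZMod 2)) ≠ 0 := by
          refine Function.ne_iff.mpr ⟨e.symm 0, ?_⟩
          simp [hvzdef]
        have hz := Matrix.exists_vecMul_eq_zero_iff.mp ⟨_, hne, hker⟩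
        rw [hdet2] at hz
        exact one_ne_zero hz
      obtain ⟨s, hs⟩ := hTUz n (⇑e) id e.injective Function.injective_id
      cases s with
      | zero =>
        -- determinant zero: rows are dependent over ℚ
        have hdetQ : ((Mz.submatrix (⇑e) id).map (Int.cast : ℤ → ℚ)).det = 0 := by
          have : (Mz.submatrix (⇑e) id).map (Int.cast : ℤ → ℚ)
              = (Int.castRingHom ℚ).mapMatrix (Mz.submatrix (⇑e) id) := rfl
          rw [this, ← RingHom.map_det, ← hs]
          simp
        obtain ⟨c, hc0, hcm⟩ := Matrix.exists_vecMul_eq_zero_iff.mpr hdetQ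
        have hc' : ∀ j, ∑ i : Fin (k+1), c (e.symm i) * Mq i j = 0 := by
          intro j
          have hj := congrFun hcm j
          rw [← Equiv.sum_comp e (fun i => c (e.symm i) * Mq i j)]
          simp only [Equiv.symm_apply_apply]
          simpa [Matrix.vecMul, dotProduct, hMqdef, Matrix.map_apply,
            Matrix.submatrix_apply] using hj
        have hc'0 : (fun i => c (e.symm i)) ≠ 0 := by
          obtain ⟨x, hx⟩ := Function.ne_iff.mp hc0
          exact Function.ne_iff.mpr ⟨e x, by simpa using hx⟩
        obtain ⟨i0, hrep⟩ := drop_row Mq (fun i => ((vz i : ℤ) : ℚ)) (fun i => c (e.symm i))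
          hkeyq hc'0 hc'
        exact no_small_TU_rep k hkn (Mq.submatrix i0.succAbove id) (hTUq.submatrix _ _) _
          (fun j => by simpa using hrep j)
      | pos => exact hmod2 _ hs.symm (Or.inl rfl)
      | neg => exact hmod2 _ hs.symm (Or.inr rfl)
end

section
/- For i = 1, …, r let A^i ∈ ℤ^{m_i×n_i} and Ā^i ∈ ℤ^{k_i×n_i} be such that the stacked matrix [A^i; Ā^i] is totally unimodular, and let U^i ∈ ℤ^{k×k_i}. Set M = m_1 + … + m_r and let A be the (M+k)×(n_1+…+n_r) matrix whose first M rows form the block-diagonal matrix diag(A^1,…,A^r) and whose last k rows are [U^1Ā^1, U^2Ā^2, …, U^rĀ^r]. Then A admits a (k_1+…+k_r)-row affine TU decomposition, namely A = Ã + UW with W = diag(Ā^1,…,Ā^r), U the matrix whose first M rows are zero and whose last k rows are [U^1, U^2, …, U^r], and Ã = A − UW; in particular the matrix obtained by stacking Ã on top of W is totally unimodular. -/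
open Matrix Set

lemma blockDiagonal'_apply_cast {ι : Type*} [DecidableEq ι] {m n : ι → Type*} {R : Type*}
    [Zero R] (M : ∀ i, Matrix (m i) (n i) R) (a : ι) (p : Σ i, m i) (q : Σ i, n i)
    (hp : p.1 = a) (hq : q.1 = a) :
    blockDiagonal' M p q
      = M a (cast (congrArg m hp) p.2) (cast (congrArg n hq) q.2) := by
  obtain ⟨p1, p2⟩ := p
  obtain ⟨q1, q2⟩ := q
  cases hp
  cases hq
  simp [blockDiagonal'_apply_eq]

lemma blockDiagonal'_isTotallyUnimodular {ι : Type*} [LinearOrder ι] [DecidableEq ι]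
    {m n : ι → Type*} [∀ i, Fintype (m i)] [∀ i, Fintype (n i)]
    {R : Type*} [CommRing R]
    (M : ∀ i, Matrix (m i) (n i) R) (hM : ∀ i, (M i).IsTotallyUnimodular) :
    (blockDiagonal' M).IsTotallyUnimodular := by
  classical
  rw [isTotallyUnimodular_iff]
  intro s f g
  by_cases hσ : ∃ σ : Equiv.Perm (Fin s), ∀ x, (f (σ x)).1 = (g x).1
  · obtain ⟨σ, hσ⟩ := hσ
    set D : Matrix (Fin s) (Fin s) R := (blockDiagonal' M).submatrix f g with hD
    set D' : Matrix (Fin s) (Fin s) R := D.submatrix σ id with hD'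
    set ψ : Fin s → ι := fun x => (g x).1 with hψ
    have hBT : D'.BlockTriangular ψ := by
      intro x y hxy
      show blockDiagonal' M (f (σ x)) (g y) = 0
      rw [blockDiagonal'_apply, dif_neg]
      rw [hσ x]
      exact ne_of_gt hxy
    have key : ∀ a : ι, (D'.toSquareBlock ψ a).det ∈ Set.range SignType.cast := by
      intro a
      have heq : D'.toSquareBlock ψ a =
          (M a).submatrix
            (fun x : {x // ψ x = a} => cast (congrArg m ((hσ x.1).trans x.2)) (f (σ x.1)).2)
            (fun x : {x // ψ x = a} => cast (congrArg n x.2) (g x.1).2) := by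
        ext x y
        exact blockDiagonal'_apply_cast M a (f (σ x.1)) (g y.1) ((hσ x.1).trans x.2) y.2
      rw [heq]
      exact (isTotallyUnimodular_iff_fintype (M a)).mp (hM a) {x : Fin s // ψ x = a} _ _
    have hD'det : D'.det ∈ Set.range SignType.cast := by
      rw [hBT.det]
      change _ ∈ MonoidHom.mrange SignType.castHom.toMonoidHom
      exact prod_mem fun a _ => key a
    have hperm : D'.det = (Equiv.Perm.sign σ : ℤ) * D.det := by
      rw [hD']
      exact_mod_cast Matrix.det_permute σ D
    obtain ⟨u, hu⟩ := hD'det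
    rcases Int.units_eq_one_or (Equiv.Perm.sign σ) with h1 | h1 <;>
      rw [h1] at hperm
    · refine ⟨u, ?_⟩
      rw [hu, hperm]
      push_cast
      ring
    · refine ⟨-u, ?_⟩
      rw [SignType.coe_neg, hu, hperm]
      push_cast
      ring
  · push_neg at hσ
    refine ⟨0, ?_⟩
    rw [SignType.coe_zero, eq_comm, Matrix.det_apply]
    apply Finset.sum_eq_zero
    intro σ _
    obtain ⟨x, hx⟩ := hσ σ
    rw [Finset.prod_eq_zero (Finset.mem_univ x), smul_zero]
    show blockDiagonal' M (f (σ x)) (g x) = 0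
    rw [blockDiagonal'_apply, dif_neg hx]

/-- **Block TU structure.** If each stacked matrix `[Aⁱ; Āⁱ]` is totally unimodular, then
the matrix `A` with block-diagonal upper part `diag(A¹,…,Aʳ)` and lower part
`[U¹Ā¹, …, UʳĀʳ]` admits a `(k₁ + … + k_r)`-row affine TU decomposition `A = Ã + U W`
with `W = diag(Ā¹,…,Āʳ)` and `U` having zero rows on top and `[U¹, …, Uʳ]` below;
in particular the stacking of `Ã = A - U W` on top of `W` is totally unimodular. -/
theorem block_TU_structure_affine_TU_decomposition
    (r k : ℕ) (mdim ndim kdim : Fin r → ℕ)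
    (A : ∀ i, Matrix (Fin (mdim i)) (Fin (ndim i)) ℤ)
    (Abar : ∀ i, Matrix (Fin (kdim i)) (Fin (ndim i)) ℤ)
    (U : ∀ i, Matrix (Fin k) (Fin (kdim i)) ℤ)
    (hTU : ∀ i, (Matrix.fromRows (A i) (Abar i)).IsTotallyUnimodular) :
    (Matrix.fromRows
      ((Matrix.fromRows (Matrix.blockDiagonal' A)
          (Matrix.of fun (i : Fin k) (jq : Σ j, Fin (ndim j)) =>
            (U jq.1 * Abar jq.1) i jq.2))
        - (Matrix.fromRows (0 : Matrix (Σ i, Fin (mdim i)) (Σ i, Fin (kdim i)) ℤ)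
            (Matrix.of fun (i : Fin k) (jq : Σ j, Fin (kdim j)) => U jq.1 i jq.2))
          * Matrix.blockDiagonal' Abar)
      (Matrix.blockDiagonal' Abar)).IsTotallyUnimodular := by
  set T : Matrix (Σ i, Fin (mdim i) ⊕ Fin (kdim i)) (Σ i, Fin (ndim i)) ℤ :=
    blockDiagonal' (fun i => Matrix.fromRows (A i) (Abar i)) with hT
  have hTTU : T.IsTotallyUnimodular := by
    rw [hT]
    exact blockDiagonal'_isTotallyUnimodular _ hTU
  have hbig : (Matrix.fromRows T (Matrix.replicateRow (Fin k) 0)).IsTotallyUnimodular :=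
    (Matrix.fromRows_replicateRow0_isTotallyUnimodular_iff T).mpr hTTU
  have hsub := hbig.submatrix
    (fun x : ((Σ i, Fin (mdim i)) ⊕ Fin k) ⊕ (Σ i, Fin (kdim i)) =>
      match x with
      | Sum.inl (Sum.inl ⟨i, p⟩) => Sum.inl ⟨i, Sum.inl p⟩
      | Sum.inl (Sum.inr t) => Sum.inr t
      | Sum.inr ⟨i, q⟩ => Sum.inl ⟨i, Sum.inr q⟩)
    (id : (Σ i, Fin (ndim i)) → _)
  convert hsub using 1
  ext x c
  obtain ⟨j, q'⟩ := c
  match x with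
  | Sum.inl (Sum.inl ⟨i, p⟩) =>
    show blockDiagonal' A ⟨i, p⟩ ⟨j, q'⟩ - _ = T ⟨i, Sum.inl p⟩ ⟨j, q'⟩
    have hz : ((Matrix.fromRows (0 : Matrix (Σ i, Fin (mdim i)) (Σ i, Fin (kdim i)) ℤ)
            (Matrix.of fun (i : Fin k) (jq : Σ j, Fin (kdim j)) => U jq.1 i jq.2))
          * Matrix.blockDiagonal' Abar) (Sum.inl ⟨i, p⟩) ⟨j, q'⟩ = 0 := by
      rw [Matrix.mul_apply]
      apply Finset.sum_eq_zero
      intro jq _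
      rw [Matrix.fromRows_apply_inl, Matrix.zero_apply, zero_mul]
    rw [hz, sub_zero]
    by_cases h : i = j
    · subst h
      simp [hT, blockDiagonal'_apply_eq]
    · rw [blockDiagonal'_apply_ne _ _ _ h, hT, blockDiagonal'_apply_ne _ _ _ h]
  | Sum.inl (Sum.inr t) =>
    show (U j * Abar j) t q' - _ = (0 : (Σ i, Fin (ndim i)) → ℤ) ⟨j, q'⟩
    have hz : ((Matrix.fromRows (0 : Matrix (Σ i, Fin (mdim i)) (Σ i, Fin (kdim i)) ℤ)
            (Matrix.of fun (i : Fin k) (jq : Σ j, Fin (kdim j)) => U jq.1 i jq.2))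
          * Matrix.blockDiagonal' Abar) (Sum.inr t) ⟨j, q'⟩ = (U j * Abar j) t q' := by
      rw [Matrix.mul_apply, ← Finset.univ_sigma_univ, Finset.sum_sigma]
      rw [Finset.sum_eq_single_of_mem j (Finset.mem_univ j)]
      · rw [Matrix.mul_apply]
        apply Finset.sum_congr rfl
        intro q'' _
        rw [Matrix.fromRows_apply_inr, Matrix.of_apply, blockDiagonal'_apply_eq]
      · intro j' _ hne
        apply Finset.sum_eq_zero
        intro q'' _
        rw [blockDiagonal'_apply_ne _ _ _ hne, mul_zero]
    rw [hz, sub_self]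
    rfl
  | Sum.inr ⟨i, q⟩ =>
    show blockDiagonal' Abar ⟨i, q⟩ ⟨j, q'⟩ = T ⟨i, Sum.inr q⟩ ⟨j, q'⟩
    by_cases h : i = j
    · subst h
      simp [hT, blockDiagonal'_apply_eq]
    · rw [blockDiagonal'_apply_ne _ _ _ h, hT, blockDiagonal'_apply_ne _ _ _ h]
end

section
/- Let A ∈ {0,±1}^{n×n} be almost totally unimodular, i.e., A is not totally unimodular but every proper submatrix of A is totally unimodular. Then A admits a 1-row affine TU decomposition, and consequently the affine TU-dimension of A equals 1. Concretely, writing A = [a, Ā] where a is the first column, the decomposition A = [0, Ā] + a·[1, 0, …, 0] is an affine TU decomposition: the matrix obtained by stacking [0, Ā] on top of the row [1, 0, …, 0] is totally unimodular. -/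
open Matrix Set

/-- **Almost totally unimodular matrices have affine TU-dimension 1.**
If `A` is a square matrix which is not totally unimodular but all of whose proper
submatrices are totally unimodular, then zeroing out the first column of `A` and
stacking the result on top of the row `[1, 0, …, 0]` gives a totally unimodular
matrix; hence `A = [0, Ā] + a·[1,0,…,0]` is a `1`-row affine TU decomposition of `A`. -/
theorem almost_TU_implies_affine_TU_dimension_one
    (n : ℕ) (A : Matrix (Fin (n + 1)) (Fin (n + 1)) ℤ)
    (hnotTU : ¬ A.IsTotallyUnimodular)
    (hproper : ∀ (r s : ℕ) (f : Fin r → Fin (n + 1)) (g : Fin s → Fin (n + 1)),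
      Function.Injective f → Function.Injective g → (r < n + 1 ∨ s < n + 1) →
      (A.submatrix f g).IsTotallyUnimodular) :
    (∀ i j, A i j =
        (if j = 0 then 0 else A i j) + A i 0 * (if j = 0 then 1 else 0)) ∧
    (Matrix.fromRows
      (Matrix.of fun i j => if j = 0 then 0 else A i j)
      (Matrix.of fun (_ : Fin 1) (j : Fin (n + 1)) =>
        if j = 0 then (1 : ℤ) else 0)).IsTotallyUnimodular := by
  constructor
  · intro i j
    by_cases hj : j = 0 <;> simp [hj]
  · apply Matrix.IsTotallyUnimodular.fromRows_unitlike
    · -- the matrix with zeroed first column is TU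
      intro k f g hf hg
      by_cases h0 : ∃ x, g x = 0
      · obtain ⟨x, hx⟩ := h0
        refine ⟨0, ?_⟩
        rw [SignType.coe_zero, eq_comm]
        apply Matrix.det_eq_zero_of_column_eq_zero x
        intro i
        simp [hx]
      · push_neg at h0
        have hsub : ((Matrix.of fun i j => if j = 0 then (0:ℤ) else A i j).submatrix f g)
            = A.submatrix f g := by
          ext i j
          simp [h0 (j)]
        rw [hsub]
        have hkn : k < n + 1 := by
          have : Function.Injective fun x : Fin k => (⟨g x, h0 x⟩ : {j : Fin (n+1) // j ≠ 0}) := by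
            intro a b hab
            exact hg (congrArg Subtype.val hab)
          have hcard := Fintype.card_le_of_injective _ this
          simpa using Nat.lt_succ_of_le (by simpa using hcard)
        have := hproper k k f g hf hg (Or.inr hkn)
        rw [Matrix.isTotallyUnimodular_iff] at this
        simpa using this k id id
    · -- the extra row is a standard basis vector
      intro _ _
      refine ⟨0, 1, ?_⟩
      ext j
      by_cases hj : j = 0 <;> simp [hj, Pi.single_apply]
end

section
/- Let n ≥ 1, let b ∈ ℤ^n have all entries positive, and set a = 2n·b ∈ ℤ^n. Then the row vector a^T admits an (n−1)-row affine TU decomposition — i.e., there exist ã ∈ {0,±1}^n, u ∈ ℤ^{n−1}, and W ∈ {0,±1}^{(n−1)×n} such that a^T = ã^T + u^T W and stacking ã^T on top of W gives a totally unimodular matrix — if and only if there exists a nonzero vector r ∈ {0,±1}^n with b^T r = 0. -/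
open Matrix Set

private lemma mem_pm_iff (x : ℤ) :
    x ∈ ({-1, 0, 1} : Set ℤ) ↔ x ∈ Set.range ((↑) : SignType → ℤ) := by
  constructor
  · rintro (rfl | rfl | rfl)
    · exact ⟨-1, by simp⟩
    · exact ⟨0, by simp⟩
    · exact ⟨1, by simp⟩
  · rintro ⟨s, rfl⟩
    cases s <;> simp [Set.mem_insert_iff]

private lemma neg_mem_signRange {x : ℤ} (h : x ∈ Set.range ((↑) : SignType → ℤ)) :
    -x ∈ Set.range ((↑) : SignType → ℤ) := by
  obtain ⟨s, rfl⟩ := h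
  exact ⟨-s, by simp⟩

private lemma mul_mem_signRange {x y : ℤ} (hx : x ∈ Set.range ((↑) : SignType → ℤ))
    (hy : y ∈ Set.range ((↑) : SignType → ℤ)) :
    x * y ∈ Set.range ((↑) : SignType → ℤ) := by
  obtain ⟨s, rfl⟩ := hx
  obtain ⟨t, rfl⟩ := hy
  exact ⟨s * t, by simp⟩

private lemma singleRow_TU {k : ℕ} (v : Fin k → ℤ)
    (hv : ∀ j, v j ∈ Set.range ((↑) : SignType → ℤ)) :
    (Matrix.of fun (_ : Fin 1) j => v j).IsTotallyUnimodular := by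
  intro l f g hf hg
  match l with
  | 0 => exact ⟨1, by simp [Matrix.det_fin_zero]⟩
  | 1 => simpa [Matrix.det_fin_one] using hv (g 0)
  | (l + 2) =>
    exact absurd (hf (a₁ := 0) (a₂ := 1) (Subsingleton.elim _ _)) (by simp [Fin.ext_iff])

private lemma rowsel {m k : ℕ} (A : Matrix (Fin m) (Fin k) ℚ)
    (hA : LinearIndependent ℚ (fun j => Aᵀ j)) :
    ∃ f : Fin k → Fin m, Function.Injective f ∧ (A.submatrix f id).det ≠ 0 := by
  classical
  -- the rows of A span ℚ^k
  have hinj : Function.Injective A.mulVec := Matrix.mulVec_injective_iff.mpr hA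
  have hrank : A.rank = k := by
    have : Function.Injective A.mulVecLin := hinj
    rw [Matrix.rank]
    rw [LinearMap.finrank_range_of_inj this]
    simp
  have hrankT : Aᵀ.rank = k := by rw [Matrix.rank_transpose]; exact hrank
  have hspan : Submodule.span ℚ (Set.range A) = ⊤ := by
    have h1 : Module.finrank ℚ (Submodule.span ℚ (Set.range A)) = k := by
      have := Aᵀ.rank_eq_finrank_span_cols
      rw [hrankT] at this
      exact this.symm
    apply Submodule.eq_top_of_finrank_eq
    rw [h1]; simp
  -- choose an independent spanning subset of the rows
  obtain ⟨t, hts, htspan, htli⟩ := exists_linearIndependent ℚ (Set.range A)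
  rw [hspan] at htspan
  have hbasis : Module.Basis t ℚ (Fin k → ℚ) := Module.Basis.mk htli (by rw [Subtype.range_coe_subtype, Set.setOf_mem_eq, htspan])
  have : FiniteDimensional ℚ (Fin k → ℚ) := by infer_instance
  have : Fintype t := FiniteDimensional.fintypeBasisIndex hbasis
  have hcard : Fintype.card t = k := by
    have := Module.finrank_eq_card_basis hbasis
    simp only [Module.finrank_fin_fun] at this
    omega
  let e : Fin k ≃ t := (Fintype.equivFinOfCardEq hcard).symm
  -- pick row indices
  have hpre : ∀ q : Fin k, ∃ i : Fin m, A i = (e q : Fin k → ℚ) := fun q => hts (e q).2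
  choose f hf using hpre
  refine ⟨f, ?_, ?_⟩
  · intro q q' hqq'
    have : (e q : Fin k → ℚ) = (e q' : Fin k → ℚ) := by rw [← hf q, ← hf q', hqq']
    exact e.injective (Subtype.ext this)
  · -- rows of the submatrix are the basis vectors, hence independent
    have hrows : LinearIndependent ℚ (fun q : Fin k => (A.submatrix f id) q) := by
      have heq : (fun q : Fin k => (A.submatrix f id) q) = fun q => ((e q : Fin k → ℚ)) := by
        funext q; exact hf q
      rw [heq]
      exact htli.comp e e.injective
    intro hdet
    have hdetT : (A.submatrix f id)ᵀ.det = 0 := by rw [Matrix.det_transpose]; exact hdet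
    obtain ⟨v, hv0, hv⟩ := (Matrix.exists_mulVec_eq_zero_iff).mpr hdetT
    have hsum : ∑ q, v q • (A.submatrix f id) q = 0 := by
      funext j
      have := congrFun hv j
      simp only [Matrix.mulVec, dotProduct, Matrix.transpose_apply] at this
      rw [Finset.sum_apply]
      simpa [Pi.smul_apply, smul_eq_mul, mul_comm] using this
    have := Fintype.linearIndependent_iff.mp hrows v hsum
    exact hv0 (funext this)

private lemma mulVec_map_cast {m N : ℕ} (V : Matrix (Fin m) (Fin N) ℤ) (r : Fin N → ℤ) :
    (V.map ((↑) : ℤ → ℚ)).mulVec (fun i => (r i : ℚ)) = fun i => ((V.mulVec r) i : ℚ) := by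
  funext i
  simp only [Matrix.mulVec, dotProduct, Matrix.map_apply]
  push_cast
  rfl

private lemma tu_kernel : ∀ (N : ℕ) {m : ℕ} (V : Matrix (Fin m) (Fin N) ℤ),
    V.IsTotallyUnimodular →
    ∀ c : Fin N → ℚ, c ≠ 0 → (V.map ((↑) : ℤ → ℚ)).mulVec c = 0 →
    ∃ r : Fin N → ℤ, r ≠ 0 ∧ (∀ i, r i ∈ Set.range ((↑) : SignType → ℤ)) ∧
      V.mulVec r = 0 := by
  intro N
  induction N with
  | zero =>
    intro m V _ c hc _
    exact absurd (funext fun i => i.elim0) hc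
  | succ n IH =>
    intro m V hTU c hc hker
    by_cases hA : ∃ (d : Fin (n+1) → ℚ) (j : Fin (n+1)),
        d ≠ 0 ∧ (V.map ((↑) : ℤ → ℚ)).mulVec d = 0 ∧ d j = 0
    · obtain ⟨d, j, hd0, hdker, hdj⟩ := hA
      have hTU' : (V.submatrix id j.succAbove).IsTotallyUnimodular :=
        hTU.submatrix id j.succAbove
      have hd'0 : (fun z => d (j.succAbove z)) ≠ 0 := by
        intro h
        apply hd0
        funext i
        rcases eq_or_ne i j with rfl | hij
        · exact hdj
        · obtain ⟨z, rfl⟩ := Fin.exists_succAbove_eq hij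
          exact congrFun h z
      have hker' : ((V.submatrix id j.succAbove).map ((↑) : ℤ → ℚ)).mulVec
          (fun z => d (j.succAbove z)) = 0 := by
        funext i
        have h1 := congrFun hdker i
        simp only [Matrix.mulVec, dotProduct, Pi.zero_apply, Matrix.map_apply] at h1 ⊢
        rw [Fin.sum_univ_succAbove (fun w => ((V i w : ℚ)) * d w) j, hdj, mul_zero,
          zero_add] at h1
        simpa using h1
      obtain ⟨r', hr'0, hr'pm, hr'ker⟩ := IH (V.submatrix id j.succAbove) hTU' _ hd'0 hker'
      refine ⟨j.insertNth 0 r', ?_, ?_, ?_⟩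
      · intro h
        apply hr'0
        funext z
        have := congrFun h (j.succAbove z)
        simpa [Fin.insertNth_apply_succAbove] using this
      · intro i
        rcases eq_or_ne i j with rfl | hij
        · simp only [Fin.insertNth_apply_same]
          exact ⟨0, rfl⟩
        · obtain ⟨z, rfl⟩ := Fin.exists_succAbove_eq hij
          simp only [Fin.insertNth_apply_succAbove]
          exact hr'pm z
      · funext i
        have h2 := congrFun hr'ker i
        simp only [Matrix.mulVec, dotProduct, Pi.zero_apply,
          Matrix.submatrix_apply, id_eq] at h2 ⊢
        rw [Fin.sum_univ_succAbove _ j]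
        simp only [Fin.insertNth_apply_same, mul_zero, zero_add,
          Fin.insertNth_apply_succAbove]
        exact h2
    · push_neg at hA
      have hc0 : c 0 ≠ 0 := hA c 0 hc hker
      set Vq := V.map ((↑) : ℤ → ℚ) with hVq
      have hcols : LinearIndependent ℚ (fun z : Fin n => (Vq.submatrix id Fin.succ)ᵀ z) := by
        by_contra hdep
        obtain ⟨g, hg, z0, hz0⟩ := Fintype.not_linearIndependent_iff.mp hdep
        have hgne : (Fin.cons 0 g : Fin (n+1) → ℚ) ≠ 0 := by
          intro h
          exact hz0 (by simpa using congrFun h z0.succ)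
        have hker2 : Vq.mulVec (Fin.cons 0 g) = 0 := by
          funext i
          have h3 := congrFun hg i
          simp only [Finset.sum_apply, Pi.smul_apply, Matrix.transpose_apply,
            Matrix.submatrix_apply, id_eq, smul_eq_mul, Pi.zero_apply] at h3
          simp only [Matrix.mulVec, dotProduct, Pi.zero_apply]
          rw [Fin.sum_univ_succ]
          simpa [mul_comm] using h3
        exact hA (Fin.cons 0 g) 0 hgne hker2 rfl
      obtain ⟨f, hfinj, hfdet⟩ := rowsel (Vq.submatrix id Fin.succ) hcols
      set B := V.submatrix f Fin.succ with hB
      have hBq : B.map ((↑) : ℤ → ℚ) = (Vq.submatrix id Fin.succ).submatrix f id := by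
        ext p q
        simp [hB, hVq]
      have hcast : ((B.det : ℤ) : ℚ) = (B.map ((↑) : ℤ → ℚ)).det := by
        have := RingHom.map_det (Int.castRingHom ℚ) B
        simpa using this
      have hBdet : B.det ≠ 0 := by
        intro h
        apply hfdet
        rw [← hBq, ← hcast, h]
        simp
      have hBTU : B.IsTotallyUnimodular := hTU.submatrix f Fin.succ
      have hBpm : B.det = 1 ∨ B.det = -1 := by
        have := hBTU n id id Function.injective_id Function.injective_id
        rw [Matrix.submatrix_id_id] at this
        obtain ⟨s, hs⟩ := this
        cases s with
        | zero => exact absurd hs.symm (by simpa using hBdet)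
        | pos => left; exact hs.symm
        | neg => right; exact hs.symm
      have hBdet2 : B.det * B.det = 1 := by rcases hBpm with h | h <;> rw [h] <;> ring
      set w : Fin n → ℤ := fun i => - V (f i) 0 with hw
      set x : Fin n → ℤ := B.det • Matrix.cramer B w with hx
      have hBx : B.mulVec x = w := by
        rw [hx, Matrix.mulVec_smul, Matrix.mulVec_cramer, smul_smul, hBdet2, one_smul]
      have hxpm : ∀ i, x i ∈ Set.range ((↑) : SignType → ℤ) := by
        intro i
        have hupd : B.updateCol i (fun q => V (f q) 0)
            = V.submatrix f (Function.update (Fin.succ : Fin n → Fin (n+1)) i 0) := by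
          ext p q
          rw [Matrix.updateCol_apply, Matrix.submatrix_apply, Function.update_apply]
          by_cases h : q = i <;> simp [h, hB]
        have hginj : Function.Injective (Function.update (Fin.succ : Fin n → Fin (n+1)) i 0) := by
          intro q q' h
          rw [Function.update_apply, Function.update_apply] at h
          by_cases hq : q = i <;> by_cases hq' : q' = i
          · rw [hq, hq']
          · simp only [hq, if_true, hq', if_false] at h
            exact absurd h.symm (Fin.succ_ne_zero q')
          · simp only [hq, if_false, hq', if_true] at h
            exact absurd h (Fin.succ_ne_zero q)
          · simp only [hq, if_false, hq', if_false] at h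
            exact Fin.succ_injective n h
        have hdetmem : (V.submatrix f (Function.update (Fin.succ : Fin n → Fin (n+1)) i 0)).det
            ∈ Set.range ((↑) : SignType → ℤ) := hTU n f _ hfinj hginj
        have hwsmul : w = (-1 : ℤ) • (fun q => V (f q) 0) := by
          funext q; simp [hw]
        have : x i = B.det * ((-1 : ℤ) *
            (V.submatrix f (Function.update (Fin.succ : Fin n → Fin (n+1)) i 0)).det) := by
          rw [hx, Pi.smul_apply, smul_eq_mul, Matrix.cramer_apply, hwsmul,
            Matrix.det_updateCol_smul, hupd]
        rw [this]
        apply mul_mem_signRange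
        · rcases hBpm with h | h <;> rw [h]
          · exact ⟨1, by simp⟩
          · exact ⟨-1, by simp⟩
        · rw [neg_one_mul]
          exact neg_mem_signRange hdetmem
      refine ⟨Fin.cons 1 x, ?_, ?_, ?_⟩
      · intro h
        simpa using congrFun h 0
      · intro i
        refine Fin.cases ?_ ?_ i
        · exact ⟨1, by simp⟩
        · exact hxpm
      · -- show the integer vector is (c 0)⁻¹ • c, hence in the kernel
        set c' : Fin (n+1) → ℚ := (c 0)⁻¹ • c with hc'
        have hc'0 : c' 0 = 1 := by
          simp [hc', inv_mul_cancel₀ hc0]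
        have hc'ker : Vq.mulVec c' = 0 := by
          rw [hc', Matrix.mulVec_smul, hker, smul_zero]
        have hBqdet : (B.map ((↑) : ℤ → ℚ)).det ≠ 0 := by
          rw [← hcast]
          exact_mod_cast hBdet
        have hBqinj : Function.Injective (B.map ((↑) : ℤ → ℚ)).mulVec :=
          Matrix.mulVec_injective_iff_isUnit.mpr
            ((Matrix.isUnit_iff_isUnit_det _).mpr (isUnit_iff_ne_zero.mpr hBqdet))
        have key : (B.map ((↑) : ℤ → ℚ)).mulVec (fun z => (x z : ℚ))
            = (B.map ((↑) : ℤ → ℚ)).mulVec (fun z => c' z.succ) := by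
          rw [mulVec_map_cast B x, hBx]
          funext i
          have h4 := congrFun hc'ker (f i)
          simp only [Matrix.mulVec, dotProduct, Pi.zero_apply, Matrix.map_apply,
            hVq] at h4 ⊢
          rw [Fin.sum_univ_succ, hc'0, mul_one] at h4
          have : ∑ z : Fin n, ((V (f i) z.succ : ℚ)) * c' z.succ = - (V (f i) 0 : ℚ) := by
            linarith
          rw [hB]
          simpa [hw] using this.symm
        have hxc : (fun z => ((x z : ℚ))) = fun z => c' z.succ := hBqinj key
        have hrc : (fun w' => ((Fin.cons 1 x : Fin (n+1) → ℤ) w' : ℚ)) = c' := by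
          funext w'
          refine Fin.cases ?_ ?_ w'
          · simpa using hc'0.symm
          · intro z
            simpa using congrFun hxc z
        have hfinal : Vq.mulVec (fun w' => ((Fin.cons 1 x : Fin (n+1) → ℤ) w' : ℚ)) = 0 := by
          rw [hrc, hc'ker]
        rw [hVq, mulVec_map_cast] at hfinal
        funext i
        have h5 := congrFun hfinal i
        rw [Pi.zero_apply] at h5 ⊢
        exact_mod_cast h5

private lemma abs_le_one_of_sign {x : ℤ} (h : x ∈ Set.range ((↑) : SignType → ℤ)) :
    |x| ≤ 1 := by
  obtain ⟨s, rfl⟩ := h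
  cases s <;> simp


/-- **Hardness reduction: equal-sum-subsets versus `(n-1)`-row affine TU decompositions.**
For a positive integer vector `b` and `a = 2n·b`, the row vector `aᵀ` admits an
`(n-1)`-row affine TU decomposition if and only if there exists a nonzero
`r ∈ {0,±1}ⁿ` with `bᵀ r = 0`. -/
theorem equal_sum_subsets_iff_affine_TU_decomposition
    (n : ℕ) (hn : 1 ≤ n) (b : Fin n → ℤ) (hb : ∀ i, 0 < b i)
    (a : Fin n → ℤ) (ha : ∀ i, a i = 2 * (n : ℤ) * b i) :
    (∃ (atilde : Fin n → ℤ) (u : Fin (n - 1) → ℤ)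
        (W : Matrix (Fin (n - 1)) (Fin n) ℤ),
      (∀ j, atilde j ∈ ({-1, 0, 1} : Set ℤ)) ∧
      (∀ i j, W i j ∈ ({-1, 0, 1} : Set ℤ)) ∧
      (∀ j, a j = atilde j + Matrix.vecMul u W j) ∧
      (Matrix.fromRows (Matrix.of fun (_ : Fin 1) j => atilde j) W).IsTotallyUnimodular)
    ↔ ∃ r : Fin n → ℤ, r ≠ 0 ∧ (∀ i, r i ∈ ({-1, 0, 1} : Set ℤ)) ∧
        ∑ i, b i * r i = 0 := by
  constructor
  · rintro ⟨atilde, u, W, h1, h2, h3, h4⟩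
    have hWTU : W.IsTotallyUnimodular := by
      have hsub := h4.submatrix Sum.inr id
      have heq : (Matrix.fromRows (Matrix.of fun (_ : Fin 1) j => atilde j) W).submatrix
          Sum.inr id = W := by
        ext i j
        simp
      rwa [heq] at hsub
    have hnotinj : ¬ Function.Injective (W.map ((↑) : ℤ → ℚ)).mulVecLin := by
      intro hinj
      have hle := LinearMap.finrank_le_finrank_of_injective hinj
      rw [Module.finrank_fin_fun, Module.finrank_fin_fun] at hle
      omega
    obtain ⟨y, z, hyz, hne⟩ := Function.not_injective_iff.mp hnotinj
    have hker : (W.map ((↑) : ℤ → ℚ)).mulVec (y - z) = 0 := by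
      have := sub_eq_zero.mpr hyz
      rw [← map_sub] at this
      simpa using this
    obtain ⟨r, hr0, hrpm, hrker⟩ := tu_kernel n W hWTU (y - z) (sub_ne_zero.mpr hne) hker
    refine ⟨r, hr0, fun i => (mem_pm_iff _).mpr (hrpm i), ?_⟩
    have hupper : ∑ i, a i * r i = ∑ i, atilde i * r i := by
      have hsplit : ∀ i, a i * r i = atilde i * r i + ∑ j, u j * (W j i * r i) := by
        intro i
        rw [h3 i]
        simp only [Matrix.vecMul, dotProduct]
        rw [add_mul, Finset.sum_mul]
        congr 1
        apply Finset.sum_congr rfl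
        intro j _
        ring
      rw [Finset.sum_congr rfl (fun i _ => hsplit i), Finset.sum_add_distrib,
        Finset.sum_comm]
      have hz : ∀ j, ∑ i, u j * (W j i * r i) = u j * (W.mulVec r j) := by
        intro j
        rw [Matrix.mulVec, dotProduct, Finset.mul_sum]
      rw [Finset.sum_congr rfl (fun j _ => hz j), hrker]
      simp
    have h2n : (2 * (n:ℤ)) * (∑ i, b i * r i) = ∑ i, atilde i * r i := by
      rw [← hupper, Finset.mul_sum]
      apply Finset.sum_congr rfl
      intro i _
      rw [ha i]
      ring
    have habs : |∑ i, atilde i * r i| ≤ (n:ℤ) := by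
      calc |∑ i, atilde i * r i| ≤ ∑ i, |atilde i * r i| := Finset.abs_sum_le_sum_abs _ _
        _ ≤ ∑ _i : Fin n, (1:ℤ) := by
            apply Finset.sum_le_sum
            intro i _
            rw [abs_mul]
            have hai := abs_le_one_of_sign ((mem_pm_iff _).mp (h1 i))
            have hri := abs_le_one_of_sign (hrpm i)
            nlinarith [abs_nonneg (atilde i), abs_nonneg (r i)]
        _ = n := by simp
    by_contra hS
    have hT : |(2 * (n:ℤ)) * (∑ i, b i * r i)| ≤ n := by rw [h2n]; exact habs
    rw [abs_mul, abs_of_nonneg (by positivity : (0:ℤ) ≤ 2 * (n:ℤ))] at hT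
    have h1le : (1:ℤ) ≤ |∑ i, b i * r i| := Int.one_le_abs hS
    have hn' : (1:ℤ) ≤ (n:ℤ) := by exact_mod_cast hn
    nlinarith
  · rintro ⟨r, hr0, hrpm, hrsum⟩
    obtain ⟨i0, hi0⟩ := Function.ne_iff.mp hr0
    have hi0' : r i0 ≠ 0 := hi0
    have hri0 : r i0 = 1 ∨ r i0 = -1 := by
      rcases hrpm i0 with h | h | h
      · right; exact h
      · exact absurd h hi0'
      · left; exact h
    have hri0sq : r i0 * r i0 = 1 := by rcases hri0 with h | h <;> rw [h] <;> ring
    have hk : (n - 1) + 1 = n := Nat.succ_pred_eq_of_pos hn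
    set i0c : Fin ((n-1)+1) := Fin.cast hk.symm i0 with hi0c
    set φ : Fin (n-1) → Fin n := fun j => Fin.cast hk (i0c.succAbove j) with hφ
    have hφinj : Function.Injective φ := by
      intro j j' h
      simp only [hφ] at h
      exact Fin.succAbove_right_injective (p := i0c) (Fin.cast_injective hk h)
    have hcast_i0 : Fin.cast hk i0c = i0 := by
      simp [hi0c, Fin.ext_iff]
    have hφne : ∀ j, φ j ≠ i0 := by
      intro j h
      apply Fin.succAbove_ne i0c j
      apply Fin.cast_injective hk
      rw [hcast_i0]
      exact h
    have hφsurj : ∀ i : Fin n, i ≠ i0 → ∃ j, φ j = i := by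
      intro i hi
      have hne : Fin.cast hk.symm i ≠ i0c := by
        intro h
        apply hi
        have := congrArg (Fin.cast hk) h
        simpa [Fin.ext_iff, hi0c] using this
      obtain ⟨z, hz⟩ := Fin.exists_succAbove_eq hne
      refine ⟨z, ?_⟩
      simp only [hφ, hz]
      simp [Fin.ext_iff]
    have hsum_split : ∀ F : Fin n → ℤ, ∑ i, F i = F i0 + ∑ j, F (φ j) := by
      intro F
      have h1 : ∑ i, F i = ∑ w : Fin ((n-1)+1), F (Fin.cast hk w) :=
        (Fintype.sum_equiv (finCongr hk) _ _ (fun w => by simp [Fin.ext_iff])).symm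
      rw [h1, Fin.sum_univ_succAbove (fun w => F (Fin.cast hk w)) i0c, hcast_i0]
    set W : Matrix (Fin (n-1)) (Fin n) ℤ := Matrix.of (fun j i =>
      if i = φ j then 1 else if i = i0 then -(r (φ j) * r i0) else 0) with hW
    set u : Fin (n-1) → ℤ := fun j => a (φ j) with hu
    have hWi0 : ∀ j, W j i0 = -(r (φ j) * r i0) := by
      intro j
      rw [hW, Matrix.of_apply, if_neg (Ne.symm (hφne j)), if_pos rfl]
    have hWφ : ∀ j j', W j (φ j') = if j' = j then 1 else 0 := by
      intro j j'
      rw [hW, Matrix.of_apply]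
      rcases eq_or_ne j' j with rfl | h
      · rw [if_pos rfl, if_pos rfl]
      · rw [if_neg (fun hc => h (hφinj hc)), if_neg (hφne j'), if_neg h]
    refine ⟨fun _ => 0, u, W, by intro j; simp, ?_, ?_, ?_⟩
    · -- entries of W
      intro i j
      rw [hW, Matrix.of_apply]
      split_ifs with h1 h2
      · simp
      · rw [mem_pm_iff]
        exact neg_mem_signRange (mul_mem_signRange ((mem_pm_iff _).mp (hrpm _))
          ((mem_pm_iff _).mp (hrpm _)))
      · simp
    · -- the decomposition equation
      intro i
      rw [zero_add]
      rcases eq_or_ne i i0 with heq | hi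
      · rw [heq]
        have hvm : Matrix.vecMul u W i0 = ∑ j, u j * W j i0 := rfl
        have hsum0 : ∑ i, a i * r i = 0 := by
          have h2 : ∑ i, a i * r i = 2*(n:ℤ) * ∑ i, b i * r i := by
            rw [Finset.mul_sum]
            exact Finset.sum_congr rfl fun i _ => by rw [ha i]; ring
          rw [h2, hrsum, mul_zero]
        have hkey : ∑ j, a (φ j) * r (φ j) = - (a i0 * r i0) := by
          have h3 := hsum_split (fun i => a i * r i)
          rw [hsum0] at h3
          linarith
        have h4 : ∀ j, u j * W j i0 = (- r i0) * (a (φ j) * r (φ j)) := by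
          intro j
          rw [hWi0 j]
          simp only [hu]
          ring
        rw [hvm, Finset.sum_congr rfl fun j _ => h4 j, ← Finset.mul_sum, hkey,
          show -r i0 * -(a i0 * r i0) = a i0 * (r i0 * r i0) from by ring, hri0sq, mul_one]
      · obtain ⟨j0, hj0⟩ := hφsurj i hi
        have hvm : Matrix.vecMul u W i = ∑ j, u j * W j i := rfl
        have h4 : ∀ j, u j * W j i = if j0 = j then a i else 0 := by
          intro j
          have h5 : W j i = if j0 = j then 1 else 0 := by rw [← hj0, hWφ]
          rw [h5]
          simp only [hu]
          rcases eq_or_ne j0 j with heq2 | h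
          · rw [if_pos heq2, if_pos heq2, mul_one, ← heq2, hj0]
          · rw [if_neg h, if_neg h, mul_zero]
        rw [hvm, Finset.sum_congr rfl fun j _ => h4 j, Finset.sum_ite_eq Finset.univ j0]
        simp
    · -- total unimodularity
      have hCTU : (Matrix.of fun (_ : Fin 1) j => -(r (φ j) * r i0)).IsTotallyUnimodular := by
        apply singleRow_TU
        intro j
        exact neg_mem_signRange (mul_mem_signRange ((mem_pm_iff _).mp (hrpm _))
          ((mem_pm_iff _).mp (hrpm _)))
      have hF1 : (Matrix.fromRows (Matrix.of fun (_ : Fin 1) j => -(r (φ j) * r i0))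
          (1 : Matrix (Fin (n-1)) (Fin (n-1)) ℤ)).IsTotallyUnimodular :=
        (Matrix.fromRows_one_isTotallyUnimodular_iff _).mpr hCTU
      have hebij : Function.Bijective (Sum.elim (fun _ : Fin 1 => i0) φ) := by
        constructor
        · rintro (x | z) (x' | z') h <;> simp only [Sum.elim_inl, Sum.elim_inr] at h
          · rw [Subsingleton.elim x x']
          · exact absurd h.symm (hφne z')
          · exact absurd h (hφne z)
          · rw [hφinj h]
        · intro i
          rcases eq_or_ne i i0 with rfl | hi
          · exact ⟨Sum.inl 0, rfl⟩
          · obtain ⟨j, hj⟩ := hφsurj i hi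
            exact ⟨Sum.inr j, hj⟩
      set e : (Fin 1 ⊕ Fin (n-1)) ≃ Fin n := Equiv.ofBijective _ hebij with he
      have heinl : ∀ x : Fin 1, e (Sum.inl x) = i0 := fun x => rfl
      have heinr : ∀ z, e (Sum.inr z) = φ z := fun z => rfl
      have hWT : Wᵀ = (Matrix.fromRows (Matrix.of fun (_ : Fin 1) j => -(r (φ j) * r i0))
          (1 : Matrix (Fin (n-1)) (Fin (n-1)) ℤ)).submatrix e.symm id := by
        ext i j
        have hi : e (e.symm i) = i := e.apply_symm_apply i
        rcases hs : e.symm i with x | z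
        · rw [hs, heinl] at hi
          subst hi
          rw [Matrix.transpose_apply, Matrix.submatrix_apply, hs, id_eq,
            Matrix.fromRows_apply_inl, Matrix.of_apply, hWi0]
        · rw [hs, heinr] at hi
          subst hi
          rw [Matrix.transpose_apply, Matrix.submatrix_apply, hs, id_eq,
            Matrix.fromRows_apply_inr, hWφ]
          rw [Matrix.one_apply]
      have hWTU : W.IsTotallyUnimodular := by
        rw [← Matrix.transpose_isTotallyUnimodular_iff, hWT]
        exact hF1.submatrix e.symm id
      have hstack : (Matrix.fromRows W (Matrix.replicateRow (Fin 1) (0 : Fin n → ℤ))).IsTotallyUnimodular :=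
        (Matrix.fromRows_replicateRow0_isTotallyUnimodular_iff W).mpr hWTU
      have hgoal_eq : Matrix.fromRows (Matrix.of fun (_ : Fin 1) j => (fun _ => (0:ℤ)) j) W
          = (Matrix.fromRows W (Matrix.replicateRow (Fin 1) (0 : Fin n → ℤ))).submatrix
            (Sum.elim (fun x : Fin 1 => Sum.inr x) (fun z : Fin (n-1) => Sum.inl z)) id := by
        ext i j
        rcases i with x | z
        · simp
        · simp
      rw [hgoal_eq]
      exact hstack.submatrix _ id
end

section
/- Suppose A ∈ ℤ^{m×n} admits an affine TU decomposition A = Ã + UW with W ∈ {0,±1}^{k×n} of rank k. Then there exists a unimodular matrix T ∈ ℤ^{k×k} (|det T| = 1) such that W' := T·W belongs to {0,±1}^{k×n}, contains the k×k identity matrix I_k as a submatrix (i.e., some k columns of W' form I_k), and A admits an affine TU decomposition with W': there exists U' ∈ ℤ^{m×k} such that stacking A − U'W' on top of W' gives a totally unimodular matrix. -/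
open Matrix Set

private lemma signRange_iff (x : ℤ) :
    x ∈ Set.range (SignType.cast : SignType → ℤ) ↔ x ∈ ({-1, 0, 1} : Set ℤ) := by
  constructor
  · rintro ⟨s, rfl⟩
    cases s <;> simp
  · rintro (rfl | rfl | rfl)
    · exact ⟨-1, by simp⟩
    · exact ⟨0, by simp⟩
    · exact ⟨1, by simp⟩

/-- Restricting a product to a row-subset that contains the support of the relevant rows. -/
private lemma submatrix_mul_of_support {κ β ι ι' : Type*} [Fintype κ] [DecidableEq κ]
    [Fintype ι] (P : Matrix κ κ ℤ) (N : Matrix κ β ℤ) (f' : ι → κ) (c' : ι' → β)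
    (hf' : Function.Injective f') (hP : ∀ i x, x ∉ Set.range f' → P (f' i) x = 0) :
    (P * N).submatrix f' c' = (P.submatrix f' f') * (N.submatrix f' c') := by
  ext i p
  simp only [submatrix_apply, mul_apply]
  have h1 : ∑ x : κ, P (f' i) x * N x (c' p)
      = ∑ x ∈ Finset.univ.image f', P (f' i) x * N x (c' p) := by
    symm
    apply Finset.sum_subset (Finset.subset_univ _)
    intro x _ hx
    rw [hP i x (by simpa using hx), zero_mul]
  rw [h1, Finset.sum_image (fun a _ b _ h => hf' h)]

/-- From full row rank over ℚ, find an invertible column submatrix. -/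
private lemma exists_unit_col_submatrix {k n : ℕ} (Wq : Matrix (Fin k) (Fin n) ℚ)
    (hrank : Wq.rank = k) :
    ∃ g : Fin k → Fin n, Function.Injective g ∧ IsUnit (Wq.submatrix id g) := by
  have hspan : Submodule.span ℚ (Set.range Wqᵀ) = ⊤ := by
    apply Submodule.eq_top_of_finrank_eq
    change Module.finrank ℚ (Submodule.span ℚ (Set.range Wq.col)) = _
    rw [← Matrix.rank_eq_finrank_span_cols, hrank, Module.finrank_pi]
    simp
  obtain ⟨b, hbsub, hbspan, hbind⟩ := exists_linearIndependent ℚ (Set.range Wqᵀ)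
  rw [hspan] at hbspan
  let B : Module.Basis b ℚ (Fin k → ℚ) := Module.Basis.mk hbind (by rw [Subtype.range_coe, hbspan])
  haveI : Fintype b := IsNoetherian.fintypeBasisIndex B
  have hcard : Fintype.card b = k := by
    have h := Module.finrank_eq_card_basis B
    rw [Module.finrank_pi] at h
    simpa using h.symm
  let e : Fin k ≃ b := (Fintype.equivFinOfCardEq hcard).symm
  have hchoice : ∀ x : b, ∃ j : Fin n, Wqᵀ j = (x : Fin k → ℚ) := fun x => hbsub x.2
  choose j hj using hchoice
  have hli : LinearIndependent ℚ (fun i : Fin k => Wqᵀ (j (e i))) := by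
    have hfe : (fun i : Fin k => Wqᵀ (j (e i))) = (fun x : b => (x : Fin k → ℚ)) ∘ e := by
      funext i
      simp [hj]
    rw [hfe]
    exact hbind.comp e e.injective
  refine ⟨fun i => j (e i), ?_, ?_⟩
  · intro i i' hii
    have hii' : j (e i) = j (e i') := hii
    apply e.injective
    apply Subtype.val_injective
    rw [← hj (e i), ← hj (e i'), hii']
  · rw [← Matrix.linearIndependent_cols_iff_isUnit]
    exact hli

/-- **Normalizing `W` to contain an identity submatrix.**
If `A = Ã + U W` is an affine TU decomposition with `W ∈ {0,±1}^{k×n}` of rank `k`,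
then there is a unimodular `T ∈ ℤ^{k×k}` such that `W' = T W` has entries in `{0,±1}`,
contains the `k×k` identity as a column submatrix, and `A` admits an affine TU
decomposition with `W'`. -/
theorem affine_TU_decomposition_W_with_identity_submatrix
    {m n k : ℕ} (A : Matrix (Fin m) (Fin n) ℤ) (U : Matrix (Fin m) (Fin k) ℤ)
    (W : Matrix (Fin k) (Fin n) ℤ)
    (hW : ∀ i j, W i j ∈ ({-1, 0, 1} : Set ℤ))
    (hrank : (W.map (Int.cast : ℤ → ℚ)).rank = k)
    (hTU : (Matrix.fromRows (A - U * W) W).IsTotallyUnimodular) :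
    ∃ T : Matrix (Fin k) (Fin k) ℤ,
      (T.det = 1 ∨ T.det = -1) ∧
      (∀ i j, (T * W) i j ∈ ({-1, 0, 1} : Set ℤ)) ∧
      (∃ g : Fin k → Fin n, Function.Injective g ∧
        (T * W).submatrix id g = (1 : Matrix (Fin k) (Fin k) ℤ)) ∧
      (∃ U' : Matrix (Fin m) (Fin k) ℤ,
        (Matrix.fromRows (A - U' * (T * W)) (T * W)).IsTotallyUnimodular) := by
  classical
  set At : Matrix (Fin m) (Fin n) ℤ := A - U * W with hAt
  -- W is totally unimodular
  have hWTU : W.IsTotallyUnimodular := by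
    exact hTU.submatrix Sum.inr id
  -- find g
  obtain ⟨g, hginj, hgunit⟩ := exists_unit_col_submatrix (W.map (Int.cast : ℤ → ℚ)) hrank
  set S : Matrix (Fin k) (Fin k) ℤ := W.submatrix id g with hSdef
  have hSdet0 : S.det ≠ 0 := by
    have hmap : (W.map (Int.cast : ℤ → ℚ)).submatrix id g
        = S.map (Int.castRingHom ℚ) := by
      rw [submatrix_map]; rfl
    rw [hmap, Matrix.isUnit_iff_isUnit_det, ← RingHom.mapMatrix_apply,
      ← RingHom.map_det] at hgunit
    intro h0
    rw [h0] at hgunit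
    simp at hgunit
  have hSmem := hWTU k id g Function.injective_id hginj
  rw [signRange_iff] at hSmem
  have hSdet : S.det = 1 ∨ S.det = -1 := by
    rcases hSmem with h | h | h
    · exact Or.inr h
    · exact absurd h hSdet0
    · exact Or.inl h
  haveI : Invertible S := S.invertibleOfIsUnitDet (Int.isUnit_iff.mpr hSdet)
  set T : Matrix (Fin k) (Fin k) ℤ := ⅟S with hTdef
  have hTS : T * S = 1 := invOf_mul_self S
  have hST : S * T = 1 := mul_invOf_self S
  have hTdet : T.det = 1 ∨ T.det = -1 := by
    have h1 : T.det * S.det = 1 := by rw [← det_mul, hTS, det_one]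
    rcases hSdet with h | h
    · left; rw [h, mul_one] at h1; exact h1
    · right; rw [h] at h1; omega
  -- identity submatrix
  have hTWid : (T * W).submatrix id g = 1 := by
    rw [submatrix_mul T W id id g Function.bijective_id, submatrix_id_id, ← hSdef, hTS]
  -- TU transfer setup
  set Ag : Matrix (Fin m) (Fin k) ℤ := At.submatrix id g with hAg
  set M : Matrix (Fin m ⊕ Fin k) (Fin n) ℤ := fromRows At W with hM
  set M' : Matrix (Fin m ⊕ Fin k) (Fin n) ℤ := fromRows (At - (Ag * T) * W) (T * W) with hM'
  set Q : Matrix (Fin m ⊕ Fin k) (Fin m ⊕ Fin k) ℤ := fromBlocks 1 (-(Ag * T)) 0 T with hQ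
  set Qinv : Matrix (Fin m ⊕ Fin k) (Fin m ⊕ Fin k) ℤ := fromBlocks 1 Ag 0 S with hQinv
  have hQM : Q * M = M' := by
    rw [hQ, hM, fromBlocks_mul_fromRows, hM']
    rw [Matrix.one_mul, Matrix.zero_mul, zero_add, Matrix.neg_mul, ← sub_eq_add_neg]
  have hQQ : Q * Qinv = 1 := by
    rw [hQ, hQinv, fromBlocks_multiply]
    rw [Matrix.mul_zero, Matrix.mul_zero, Matrix.zero_mul, Matrix.zero_mul, Matrix.one_mul,
      Matrix.one_mul, add_zero, zero_add, zero_add, Matrix.neg_mul, Matrix.mul_assoc Ag T S,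
      hTS, Matrix.mul_one, add_neg_cancel]
    exact fromBlocks_one
  -- column formula for M'
  have hAgcol : ((Ag * T) * W).submatrix id g = Ag := by
    rw [Matrix.mul_assoc, submatrix_mul (Ag) (T * W) id id g Function.bijective_id,
      submatrix_id_id, hTWid, Matrix.mul_one]
  have hcol : ∀ (i : Fin m ⊕ Fin k) (jj : Fin k),
      M' i (g jj) = if i = Sum.inr jj then 1 else 0 := by
    intro i jj
    cases i with
    | inl a =>
      have h1 : ((Ag * T) * W) a (g jj) = Ag a jj := by
        have := congrFun (congrFun hAgcol a) jj
        simpa using this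
      have h2 : Ag a jj = At a (g jj) := by rw [hAg]; rfl
      simp [hM', h1, h2]
    | inr b =>
      have h1 : (T * W) b (g jj) = (1 : Matrix (Fin k) (Fin k) ℤ) b jj := by
        have := congrFun (congrFun hTWid b) jj
        simpa using this
      simp [hM', h1, one_apply]
  -- main TU claim
  have hM'TU : M'.IsTotallyUnimodular := by
    intro s f c hf hc
    set ι₂ := {jj : Fin k // Sum.inr jj ∉ Set.range f} with hι₂
    set f' : Fin s ⊕ ι₂ → Fin m ⊕ Fin k := Sum.elim f (fun jj => Sum.inr jj.val) with hf'
    set c' : Fin s ⊕ ι₂ → Fin n := Sum.elim c (fun jj => g jj.val) with hc'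
    have hf'inj : Function.Injective f' := by
      rintro (p | jj) (q | jj') hxy
      · exact congrArg Sum.inl (hf hxy)
      · exact absurd ⟨p, hxy⟩ jj'.2
      · exact absurd ⟨q, hxy.symm⟩ jj.2
      · simp only [hf', Sum.elim_inr, Sum.inr.injEq] at hxy
        exact congrArg Sum.inr (Subtype.ext hxy)
    have hrangef' : ∀ b : Fin k, Sum.inr b ∈ Set.range f' := by
      intro b
      by_cases hb : Sum.inr b ∈ Set.range f
      · obtain ⟨p, hp⟩ := hb
        exact ⟨Sum.inl p, hp⟩
      · exact ⟨Sum.inr ⟨b, hb⟩, rfl⟩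
    have hQsupp : ∀ (i : Fin s ⊕ ι₂) x, x ∉ Set.range f' → Q (f' i) x = 0 := by
      intro i x hx
      match x with
      | Sum.inr b => exact absurd (hrangef' b) hx
      | Sum.inl a =>
        rcases hfi : f' i with a' | b'
        · have haa : a' ≠ a := by
            rintro rfl
            exact hx ⟨i, by rw [hfi]⟩
          simp [hQ, one_apply, haa]
        · simp [hQ]
    have hfact : M'.submatrix f' c' = (Q.submatrix f' f') * (M.submatrix f' c') := by
      rw [← hQM]
      exact submatrix_mul_of_support Q M f' c' hf'inj hQsupp
    have hRdet : (Q.submatrix f' f').det = 1 ∨ (Q.submatrix f' f').det = -1 := by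
      have h1 : (Q.submatrix f' f') * (Qinv.submatrix f' f') = 1 := by
        rw [← submatrix_mul_of_support Q Qinv f' f' hf'inj hQsupp, hQQ]
        ext i j
        simp [one_apply, hf'inj.eq_iff]
      have h2 : (Q.submatrix f' f').det * (Qinv.submatrix f' f').det = 1 := by
        rw [← det_mul, h1, det_one]
      exact Int.isUnit_iff.mp (IsUnit.of_mul_eq_one _ h2)
    have hblock : M'.submatrix f' c' =
        fromBlocks (M'.submatrix f c) 0
          (M'.submatrix (fun jj : ι₂ => Sum.inr jj.val) c) (1 : Matrix ι₂ ι₂ ℤ) := by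
      ext i j
      match i, j with
      | Sum.inl p, Sum.inl q => simp [hf', hc']
      | Sum.inl p, Sum.inr jj =>
        have h0 : M' (f p) (g jj.val) = 0 := by
          rw [hcol]
          have : f p ≠ Sum.inr jj.val := fun h => jj.2 ⟨p, h⟩
          simp [this]
        simpa [hf', hc'] using h0
      | Sum.inr jj, Sum.inl q => simp [hf', hc']
      | Sum.inr jj, Sum.inr jj' =>
        have h0 : M' (Sum.inr jj.val) (g jj'.val) = if jj = jj' then 1 else 0 := by
          rw [hcol]
          simp [Subtype.val_inj]
        simpa [hf', hc', one_apply] using h0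
    have hdet1 : (M'.submatrix f' c').det = (M'.submatrix f c).det := by
      rw [hblock, det_fromBlocks_zero₁₂, det_one, mul_one]
    obtain ⟨sg, hsg⟩ := (isTotallyUnimodular_iff_fintype _).mp hTU (Fin s ⊕ ι₂) f' c'
    rcases hRdet with hu | hu
    · refine ⟨sg, ?_⟩
      rw [hsg, ← hdet1, hfact, det_mul, hu, one_mul]
    · refine ⟨-sg, ?_⟩
      have hneg : ((-sg : SignType) : ℤ) = -(sg : ℤ) := by cases sg <;> simp
      rw [hneg, hsg, ← hdet1, hfact, det_mul, hu, neg_one_mul]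
  -- assemble
  refine ⟨T, hTdet, ?_, ⟨g, hginj, hTWid⟩, ⟨U * S + Ag, ?_⟩⟩
  · intro i j
    rw [← signRange_iff]
    have h := hM'TU.apply (Sum.inr i) j
    simpa [hM'] using h
  · have htop : A - (U * S + Ag) * (T * W) = At - (Ag * T) * W := by
      rw [Matrix.add_mul, hAt]
      have h1 : U * S * (T * W) = U * W := by
        rw [Matrix.mul_assoc U S (T * W), ← Matrix.mul_assoc S T W, hST, Matrix.one_mul]
      rw [h1, ← Matrix.mul_assoc Ag T W, sub_add_eq_sub_sub]
    rw [htop]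
    exact hM'TU
end

section
/- Let n > k ≥ 1, A₁ ∈ ℤ^{m×k}, A₂ ∈ ℤ^{m×(n−k)}, and let W₂ ∈ {0,±1}^{k×(n−k)} be totally unimodular; set W = [I_k, W₂] ∈ {0,±1}^{k×n}. Then there exists U ∈ ℤ^{m×k} such that A = [A₁, A₂] admits the affine TU decomposition A = (A − UW) + UW (with the stacking of A − UW on top of W totally unimodular) if and only if the (m+k)×(n−k) matrix obtained by stacking A₂ − A₁W₂ on top of W₂ is totally unimodular. Moreover, when this holds one may take U = A₁ and A − UW = [0_{m×k}, A₂ − A₁W₂]. -/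
open Matrix Set

private lemma fromRows_swap_TU {m₁ m₂ n : Type*} {R : Type*} [CommRing R]
    {X : Matrix m₁ n R} {Y : Matrix m₂ n R}
    (h : (fromRows X Y).IsTotallyUnimodular) : (fromRows Y X).IsTotallyUnimodular := by
  have : fromRows Y X = (fromRows X Y).submatrix Sum.swap id := by
    ext i j; cases i <;> rfl
  rw [this]
  exact h.submatrix _ _

private lemma fromColumns_sub {m n₁ n₂ : Type*} {R : Type*} [CommRing R]
    (A : Matrix m n₁ R) (B : Matrix m n₂ R) (C : Matrix m n₁ R) (D : Matrix m n₂ R) :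
    fromCols A B - fromCols C D = fromCols (A - C) (B - D) := by
  ext i j; cases j <;> simp [fromCols]

/-- appending [0;1] identity columns to a stacked TU matrix keeps it TU -/
private lemma blocks_zero_one_TU {m k l : ℕ}
    (B : Matrix (Fin m) (Fin l) ℤ) (W : Matrix (Fin k) (Fin l) ℤ)
    (h : (fromRows B W).IsTotallyUnimodular) :
    (fromBlocks (0 : Matrix (Fin m) (Fin k) ℤ) B (1 : Matrix (Fin k) (Fin k) ℤ) W).IsTotallyUnimodular := by
  set E : Matrix (Fin m ⊕ Fin k) (Fin k) ℤ := fromRows 0 1 with hE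
  have hEB : fromBlocks (0 : Matrix (Fin m) (Fin k) ℤ) B 1 W
      = fromCols E (fromRows B W) := by
    rw [hE, fromCols_fromRows_eq_fromBlocks]
  rw [hEB, ← transpose_isTotallyUnimodular_iff, transpose_fromCols]
  apply fromRows_swap_TU
  apply (fromRows_isTotallyUnimodular_iff_rows ?_).mpr h.transpose
  intro _ i
  refine ⟨Sum.inr i, 1, funext fun x => ?_⟩
  cases x with
  | inl a => simp [hE, E, transpose_apply, fromRows_apply_inl, Pi.single_apply]
  | inr b => simp [hE, E, transpose_apply, fromRows_apply_inr, one_apply, Pi.single_apply, eq_comm]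


private lemma sum_over_F {r m k : ℕ} {κ : Type} [Fintype κ]
    (F : Fin r ⊕ κ → Fin m ⊕ Fin k) (hF : Function.Injective F)
    (hsurj : ∀ j : Fin k, ∃ z, F z = Sum.inr j)
    (χ : Fin m ⊕ Fin k → ℤ) (hχ : ∀ a, χ (Sum.inl a) = 0) :
    ∑ z, χ (F z) = ∑ j, χ (Sum.inr j) := by
  classical
  have h1 : ∑ s ∈ Finset.univ.image F, χ s = ∑ z, χ (F z) :=
    Finset.sum_image (fun x _ y _ h => hF h)
  rw [← h1]
  have h2 : ∑ j : Fin k, χ (Sum.inr j) = ∑ s : Fin m ⊕ Fin k, χ s := by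
    rw [Fintype.sum_sum_type]
    simp [hχ]
  rw [h2]
  have h3 : ∀ s ∈ (Finset.univ : Finset (Fin m ⊕ Fin k)), s ∉ Finset.univ.image F → χ s = 0 := by
    intro s _ hs
    cases s with
    | inl a => exact hχ a
    | inr j =>
      exfalso
      obtain ⟨z, hz⟩ := hsurj j
      exact hs (Finset.mem_image.mpr ⟨z, Finset.mem_univ z, hz⟩)
  exact Finset.sum_subset (Finset.subset_univ _) h3

private lemma key_TU {m k l : ℕ} (B : Matrix (Fin m) (Fin l) ℤ) (W : Matrix (Fin k) (Fin l) ℤ)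
    (C : Matrix (Fin m) (Fin k) ℤ)
    (h : (fromBlocks C (B + C * W) (1 : Matrix (Fin k) (Fin k) ℤ) W).IsTotallyUnimodular) :
    (fromRows B W).IsTotallyUnimodular := by
  classical
  intro r f g hf hg
  set M := fromBlocks C (B + C * W) (1 : Matrix (Fin k) (Fin k) ℤ) W with hM
  let κ := {b : Fin k // ∀ i, f i ≠ Sum.inr b}
  let F : Fin r ⊕ κ → Fin m ⊕ Fin k := Sum.elim f (fun b => Sum.inr b.1)
  let G : Fin r ⊕ κ → Fin k ⊕ Fin l := Sum.elim (fun i => Sum.inr (g i)) (fun b => Sum.inl b.1)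
  have hFinj : Function.Injective F := by
    intro x y hxy
    cases x with
    | inl i =>
      cases y with
      | inl i' =>
        simp only [F, Sum.elim_inl] at hxy
        exact congrArg Sum.inl (hf hxy)
      | inr b =>
        simp only [F, Sum.elim_inl, Sum.elim_inr] at hxy
        exact absurd hxy (b.2 i)
    | inr b =>
      cases y with
      | inl i =>
        simp only [F, Sum.elim_inl, Sum.elim_inr] at hxy
        exact absurd hxy.symm (b.2 i)
      | inr b' =>
        simp only [F, Sum.elim_inr, Sum.inr.injEq] at hxy
        exact congrArg Sum.inr (Subtype.ext hxy)
  have hsurj : ∀ j : Fin k, ∃ z, F z = Sum.inr j := by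
    intro j
    by_cases hj : ∀ i, f i ≠ Sum.inr j
    · exact ⟨Sum.inr ⟨j, hj⟩, rfl⟩
    · push_neg at hj
      obtain ⟨i, hi⟩ := hj
      exact ⟨Sum.inl i, hi⟩
  let φ : (Fin m ⊕ Fin k) → (Fin m ⊕ Fin k) → ℤ := fun s t =>
    Sum.elim (fun a => Sum.elim (fun _ => 0) (fun j => -(C a j)) t) (fun _ => 0) s
  have hφl : ∀ s a, φ s (Sum.inl a) = 0 := by
    intro s a; rcases s with a' | j' <;> simp [φ]
  have hφr : ∀ t j, φ (Sum.inr j) t = 0 := by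
    intro t j; simp [φ]
  let V : Matrix (Fin r ⊕ κ) (Fin r ⊕ κ) ℤ := Matrix.of fun x y => φ (F x) (F y)
  have hV2 : V * V = 0 := by
    ext x y
    rw [mul_apply, Matrix.zero_apply]
    apply Finset.sum_eq_zero
    intro z _
    rcases hz : F z with a | j
    · have h0 : φ (F x) (F z) = 0 := by rw [hz]; exact hφl _ a
      show φ (F x) (F z) * φ (F z) (F y) = 0
      rw [h0, zero_mul]
    · have h0 : φ (F z) (F y) = 0 := by rw [hz]; exact hφr _ j
      show φ (F x) (F z) * φ (F z) (F y) = 0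
      rw [h0, mul_zero]
  have hLinv : (1 + V) * (1 - V) = 1 := by
    rw [mul_sub, mul_one, add_mul, one_mul, hV2, add_zero, add_sub_cancel_right]
  have hdetL : IsUnit ((1 + V).det) :=
    IsUnit.of_mul_eq_one (1 - V).det (by rw [← det_mul, hLinv, det_one])
  set Msub := M.submatrix F G with hMsubdef
  have hMsub : Msub.det ∈ Set.range SignType.cast := by
    rw [isTotallyUnimodular_iff_fintype] at h
    exact h _ F G
  set P : Matrix (Fin r ⊕ κ) (Fin r ⊕ κ) ℤ :=
    fromBlocks ((fromRows B W).submatrix f g) 0 (W.submatrix (fun b : κ => b.1) g) 1 with hP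
  have hLM : (1 + V) * Msub = P := by
    ext x y
    rw [add_mul, one_mul, Matrix.add_apply]
    have hVM : (V * Msub) x y = ∑ z, φ (F x) (F z) * M (F z) (G y) := by
      rw [mul_apply]
      rfl
    cases x with
    | inr b =>
      have h0 : (V * Msub) (Sum.inr b) y = 0 := by
        rw [hVM]
        apply Finset.sum_eq_zero
        intro z _
        rw [show F (Sum.inr b) = Sum.inr b.1 from rfl, hφr, zero_mul]
      rw [h0, add_zero]
      cases y with
      | inl i' =>
        show M (Sum.inr b.1) (Sum.inr (g i')) = W.submatrix (fun b : κ => b.1) g b i'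
        rw [hM, fromBlocks_apply₂₂, submatrix_apply]
      | inr b' =>
        show M (Sum.inr b.1) (Sum.inl b'.1) = (1 : Matrix κ κ ℤ) b b'
        rw [hM, fromBlocks_apply₂₁]
        simp [one_apply, Subtype.coe_injective.eq_iff]
    | inl i =>
      rcases hfi : f i with a | j₀
      · have hFx : F (Sum.inl i) = Sum.inl a := by simp [F, hfi]
        have hsum : (V * Msub) (Sum.inl i) y = ∑ j : Fin k, -(C a j) * M (Sum.inr j) (G y) := by
          rw [hVM, hFx]
          rw [sum_over_F F hFinj hsurj (fun s => φ (Sum.inl a) s * M s (G y))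
            (fun a' => by
              show φ (Sum.inl a) (Sum.inl a') * M (Sum.inl a') (G y) = 0
              rw [hφl, zero_mul])]
          rfl
        rw [hsum]
        cases y with
        | inl i' =>
          show M (F (Sum.inl i)) (Sum.inr (g i')) + _ = (fromRows B W).submatrix f g i i'
          rw [hFx, hM, submatrix_apply, hfi]
          rw [show (G (Sum.inl i')) = Sum.inr (g i') from rfl] at hsum ⊢
          simp only [fromBlocks_apply₁₂, fromBlocks_apply₂₂, fromRows_apply_inl]
          have : ∑ j : Fin k, -(C a j) * W j (g i') = -(C * W) a (g i') := by
            rw [mul_apply, ← Finset.sum_neg_distrib]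
            exact Finset.sum_congr rfl (fun j _ => by ring)
          rw [this]
          simp only [Matrix.add_apply]
          ring
        | inr b =>
          show M (F (Sum.inl i)) (Sum.inl b.1) + _ = (0 : Matrix (Fin r) κ ℤ) i b
          rw [hFx, hM]
          rw [show (G (Sum.inr b)) = Sum.inl b.1 from rfl] at hsum ⊢
          simp only [fromBlocks_apply₁₁, fromBlocks_apply₂₁, Matrix.zero_apply]
          have : ∑ j : Fin k, -(C a j) * (1 : Matrix (Fin k) (Fin k) ℤ) j b.1 = -(C a b.1) := by
            simp [one_apply, mul_ite]
          rw [this]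
          ring
      · have hFx : F (Sum.inl i) = Sum.inr j₀ := by simp [F, hfi]
        have h0 : (V * Msub) (Sum.inl i) y = 0 := by
          rw [hVM, hFx]
          apply Finset.sum_eq_zero
          intro z _
          rw [hφr, zero_mul]
        rw [h0, add_zero]
        cases y with
        | inl i' =>
          show M (F (Sum.inl i)) (G (Sum.inl i')) = (fromRows B W).submatrix f g i i'
          rw [hFx, hM, submatrix_apply, hfi]
          rfl
        | inr b =>
          show M (F (Sum.inl i)) (G (Sum.inr b)) = (0 : Matrix (Fin r) κ ℤ) i b
          rw [hFx, hM]
          show (1 : Matrix (Fin k) (Fin k) ℤ) j₀ b.1 = 0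
          rw [one_apply_ne]
          intro hc
          exact b.2 i (hc ▸ hfi)
  have hdetP : P.det = ((fromRows B W).submatrix f g).det := by
    rw [hP, det_fromBlocks_zero₁₂, det_one, mul_one]
  have hdet : ((fromRows B W).submatrix f g).det = (1 + V).det * Msub.det := by
    rw [← det_mul, hLM, hdetP]
  obtain ⟨s, hs⟩ := hMsub
  rcases Int.isUnit_iff.mp hdetL with h1 | h1
  · exact ⟨s, by rw [hs, hdet, h1, one_mul]⟩
  · refine ⟨-s, ?_⟩
    rw [SignType.coe_neg, hs, hdet, h1]
    ring

/-- **Deciding affine TU decompositions for `W = [I_k, W₂]`.**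
Let `A = [A₁, A₂]` and let `W₂ ∈ {0,±1}^{k×(n-k)}` be totally unimodular, and set
`W = [I_k, W₂]`. Then there exists `U` such that `A = (A - U W) + U W` is an affine TU
decomposition if and only if stacking `A₂ - A₁ W₂` on top of `W₂` gives a totally
unimodular matrix; in that case one may take `U = A₁`, whence
`A - U W = [0, A₂ - A₁ W₂]`. -/
theorem affine_TU_decomposition_with_identity_block_iff
    {m k l : ℕ} (hk : 1 ≤ k) (hl : 1 ≤ l)
    (A₁ : Matrix (Fin m) (Fin k) ℤ) (A₂ : Matrix (Fin m) (Fin l) ℤ)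
    (W₂ : Matrix (Fin k) (Fin l) ℤ) (hW₂ : W₂.IsTotallyUnimodular) :
    ((∃ U : Matrix (Fin m) (Fin k) ℤ,
        (Matrix.fromRows
          (Matrix.fromCols A₁ A₂
            - U * Matrix.fromCols (1 : Matrix (Fin k) (Fin k) ℤ) W₂)
          (Matrix.fromCols (1 : Matrix (Fin k) (Fin k) ℤ) W₂)).IsTotallyUnimodular)
      ↔ (Matrix.fromRows (A₂ - A₁ * W₂) W₂).IsTotallyUnimodular)
    ∧
    ((Matrix.fromRows (A₂ - A₁ * W₂) W₂).IsTotallyUnimodular →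
      (Matrix.fromCols A₁ A₂
          - A₁ * Matrix.fromCols (1 : Matrix (Fin k) (Fin k) ℤ) W₂
        = Matrix.fromCols (0 : Matrix (Fin m) (Fin k) ℤ) (A₂ - A₁ * W₂)) ∧
      (Matrix.fromRows
        (Matrix.fromCols A₁ A₂
          - A₁ * Matrix.fromCols (1 : Matrix (Fin k) (Fin k) ℤ) W₂)
        (Matrix.fromCols (1 : Matrix (Fin k) (Fin k) ℤ) W₂)).IsTotallyUnimodular) := by
  have hrw : ∀ U : Matrix (Fin m) (Fin k) ℤ,
      fromCols A₁ A₂ - U * fromCols (1 : Matrix (Fin k) (Fin k) ℤ) W₂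
        = fromCols (A₁ - U) (A₂ - U * W₂) := by
    intro U
    rw [mul_fromCols, Matrix.mul_one, fromColumns_sub]
  have hblocks : ∀ U : Matrix (Fin m) (Fin k) ℤ,
      fromRows (fromCols A₁ A₂ - U * fromCols (1 : Matrix (Fin k) (Fin k) ℤ) W₂)
          (fromCols (1 : Matrix (Fin k) (Fin k) ℤ) W₂)
        = fromBlocks (A₁ - U) (A₂ - U * W₂) (1 : Matrix (Fin k) (Fin k) ℤ) W₂ := by
    intro U
    rw [hrw, fromRows_fromCols_eq_fromBlocks]
  constructor
  · constructor
    · rintro ⟨U, hU⟩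
      rw [hblocks] at hU
      apply key_TU (A₂ - A₁ * W₂) W₂ (A₁ - U)
      have h2 : A₂ - A₁ * W₂ + (A₁ - U) * W₂ = A₂ - U * W₂ := by
        rw [Matrix.sub_mul]; abel
      rw [h2]
      exact hU
    · intro hN
      refine ⟨A₁, ?_⟩
      rw [hblocks, sub_self]
      exact blocks_zero_one_TU _ _ hN
  · intro hN
    refine ⟨by rw [hrw, sub_self], ?_⟩
    rw [hblocks, sub_self]
    exact blocks_zero_one_TU _ _ hN
end

section
/- Let P, Q ⊆ ℝ^n be polytopes with P ∩ Q = ∅ and dim(conv(P ∪ Q)) = n. Then there exist h ∈ ℝ^n and α₁, α₂ ∈ ℝ with α₁ < α₂ such that P ⊆ {x ∈ ℝ^n : h^T x ≤ α₁}, Q ⊆ {x ∈ ℝ^n : h^T x ≥ α₂}, and max(|{x ∈ vert(P) : h^T x = α₁}|, |{x ∈ vert(Q) : h^T x = α₂}|) ≥ ⌈(n+1)/2⌉, where vert(·) denotes the set of vertices (extreme points) of a polytope. -/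
open Set

private def dotL (n : ℕ) (c : Fin n → ℝ) : (Fin n → ℝ) →ₗ[ℝ] ℝ where
  toFun x := ∑ i, x i * c i
  map_add' x y := by simp [add_mul, Finset.sum_add_distrib]
  map_smul' r x := by simp [Finset.mul_sum, mul_assoc]

private lemma greedy_tight {V : Type*} [AddCommGroup V] [Module ℝ V]
    {ι : Type*} [Fintype ι] (L : ι → V →ₗ[ℝ] ℝ) (Γ : V →ₗ[ℝ] ℝ)
    (hker : ∀ v : V, (∀ i, L i v = 0) → Γ v = 0 → v = 0) :
    ∀ (k : ℕ) (x : V), (∀ i, L i x ≤ 0) →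
      (Finset.univ.filter fun i => L i x ≠ 0).card ≤ k →
      ∃ y : V, (∀ i, L i y ≤ 0) ∧ Γ y = Γ x ∧
        ∀ v : V, (∀ i, L i y = 0 → L i v = 0) → Γ v = 0 → v = 0 := by
  classical
  intro k
  induction k with
  | zero =>
    intro x hx hcard
    refine ⟨x, hx, rfl, fun v hv hΓ => hker v (fun i => hv i ?_) hΓ⟩
    have : (Finset.univ.filter fun i => L i x ≠ 0) = ∅ :=
      Finset.card_eq_zero.mp (Nat.le_zero.mp hcard)
    by_contra hne
    exact absurd this (Finset.ne_empty_of_mem (Finset.mem_filter.mpr ⟨Finset.mem_univ i, hne⟩))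
  | succ k ih =>
    intro x hx hcard
    by_cases hc : ∀ v : V, (∀ i, L i x = 0 → L i v = 0) → Γ v = 0 → v = 0
    · exact ⟨x, hx, rfl, hc⟩
    push_neg at hc
    obtain ⟨d₀, hd₀tight, hd₀Γ, hd₀ne⟩ := hc
    have hj : ∃ j, L j d₀ ≠ 0 := by
      by_contra hno
      push_neg at hno
      exact hd₀ne (hker d₀ hno hd₀Γ)
    obtain ⟨j₀, hj₀⟩ := hj
    obtain ⟨d, hdtight, hdΓ, j, hjd⟩ :
        ∃ d : V, (∀ i, L i x = 0 → L i d = 0) ∧ Γ d = 0 ∧ ∃ j, 0 < L j d := by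
      rcases lt_or_gt_of_ne hj₀ with hneg | hpos
      · exact ⟨-d₀, fun i hi => by simp [hd₀tight i hi], by simp [hd₀Γ],
          j₀, by simpa using hneg⟩
      · exact ⟨d₀, hd₀tight, hd₀Γ, j₀, hpos⟩
    set J : Finset ι := Finset.univ.filter (fun i => 0 < L i d) with hJ
    have hjJ : j ∈ J := Finset.mem_filter.mpr ⟨Finset.mem_univ _, hjd⟩
    have hJx : ∀ i ∈ J, L i x < 0 := by
      intro i hi
      rcases (hx i).lt_or_eq with h | h
      · exact h
      · exact absurd (hdtight i h) (ne_of_gt (Finset.mem_filter.mp hi).2)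
    obtain ⟨j', hj'J, hj'min⟩ :=
      J.exists_min_image (fun i => -L i x / L i d) ⟨j, hjJ⟩
    have hj'd : 0 < L j' d := (Finset.mem_filter.mp hj'J).2
    set lam : ℝ := -L j' x / L j' d with hlam
    have hlampos : 0 < lam := div_pos (by linarith [hJx j' hj'J]) hj'd
    set y : V := x + lam • d with hy
    have hLy : ∀ i, L i y = L i x + lam * L i d := by
      intro i; simp [hy, map_add, map_smul, smul_eq_mul]
    have hyle : ∀ i, L i y ≤ 0 := by
      intro i
      rw [hLy i]
      by_cases hid : 0 < L i d
      · have hiJ : i ∈ J := Finset.mem_filter.mpr ⟨Finset.mem_univ _, hid⟩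
        have h2 : lam ≤ -L i x / L i d := hj'min i hiJ
        have : lam * L i d ≤ -L i x := (le_div_iff₀ hid).mp h2
        linarith
      · push_neg at hid
        have : lam * L i d ≤ 0 := mul_nonpos_of_nonneg_of_nonpos hlampos.le hid
        linarith [hx i]
    have htz : ∀ i, L i x = 0 → L i y = 0 := by
      intro i hi; rw [hLy i, hi, hdtight i hi]; ring
    have hj'y : L j' y = 0 := by
      rw [hLy j', hlam, div_mul_cancel₀ _ (ne_of_gt hj'd)]; ring
    have hsub : (Finset.univ.filter fun i => L i y ≠ 0) ⊂
        (Finset.univ.filter fun i => L i x ≠ 0) := by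
      refine Finset.ssubset_iff_of_subset ?_ |>.mpr ⟨j', ?_, ?_⟩
      · intro i hi
        rw [Finset.mem_filter] at hi ⊢
        exact ⟨Finset.mem_univ _, fun h0 => hi.2 (htz i h0)⟩
      · exact Finset.mem_filter.mpr ⟨Finset.mem_univ _, ne_of_lt (hJx j' hj'J)⟩
      · simp [hj'y]
    have hcard' : (Finset.univ.filter fun i => L i y ≠ 0).card ≤ k := by
      have := Finset.card_lt_card hsub
      omega
    obtain ⟨z, hz1, hz2, hz3⟩ := ih y hyle hcard'
    refine ⟨z, hz1, ?_, hz3⟩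
    rw [hz2]
    simp [hy, map_add, map_smul, hdΓ, smul_eq_mul]

private lemma rank_count {V : Type*} [AddCommGroup V] [Module ℝ V] [FiniteDimensional ℝ V]
    {ιP ιQ : Type*} [Fintype ιP] [Fintype ιQ]
    (LP : ιP → V →ₗ[ℝ] ℝ) (LQ : ιQ → V →ₗ[ℝ] ℝ) (Γ : V →ₗ[ℝ] ℝ)
    (h : ∀ v, (∀ i, LP i v = 0) → (∀ j, LQ j v = 0) → Γ v = 0 → v = 0) :
    Module.finrank ℝ V ≤ Fintype.card ιP + Fintype.card ιQ + 1 := by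
  let F : V →ₗ[ℝ] (ιP → ℝ) × (ιQ → ℝ) × ℝ :=
    (LinearMap.pi LP).prod ((LinearMap.pi LQ).prod Γ)
  have hinj : Function.Injective F := by
    rw [← LinearMap.ker_eq_bot, Submodule.eq_bot_iff]
    intro v hv
    rw [LinearMap.mem_ker] at hv
    have h1 : (LinearMap.pi LP) v = 0 := congrArg Prod.fst hv
    have h2 : (LinearMap.pi LQ) v = 0 := congrArg Prod.fst (congrArg Prod.snd hv)
    have h3 : Γ v = 0 := congrArg Prod.snd (congrArg Prod.snd hv)
    exact h v (fun i => congrFun h1 i) (fun j => congrFun h2 j) h3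
  calc Module.finrank ℝ V ≤ Module.finrank ℝ ((ιP → ℝ) × (ιQ → ℝ) × ℝ) :=
        LinearMap.finrank_le_finrank_of_injective hinj
    _ = Fintype.card ιP + Fintype.card ιQ + 1 := by
        simp [Module.finrank_prod, Module.finrank_pi]; ring

/-- **Separation of disjoint polytopes with a face spanned by many vertices.**
If `P, Q ⊆ ℝⁿ` are disjoint polytopes with `dim conv(P ∪ Q) = n` (encoded as the affine
span of `P ∪ Q` being all of `ℝⁿ`), then there are `h ∈ ℝⁿ` and `α₁ < α₂` with
`P ⊆ {hᵀx ≤ α₁}`, `Q ⊆ {hᵀx ≥ α₂}`, and at least `⌈(n+1)/2⌉` vertices (extreme points)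
of `P` lying on `{hᵀx = α₁}` or at least `⌈(n+1)/2⌉` vertices of `Q` lying on
`{hᵀx = α₂}`. -/
theorem separation_with_large_face
    (n : ℕ) (P Q : Set (Fin n → ℝ))
    (hP : ∃ S : Finset (Fin n → ℝ), P = convexHull ℝ (S : Set (Fin n → ℝ)))
    (hQ : ∃ S : Finset (Fin n → ℝ), Q = convexHull ℝ (S : Set (Fin n → ℝ)))
    (hdisj : P ∩ Q = ∅)
    (hdim : affineSpan ℝ (P ∪ Q) = ⊤) :
    ∃ (h : Fin n → ℝ) (α₁ α₂ : ℝ), α₁ < α₂ ∧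
      (∀ x ∈ P, ∑ i, h i * x i ≤ α₁) ∧
      (∀ x ∈ Q, α₂ ≤ ∑ i, h i * x i) ∧
      (n + 2) / 2 ≤
        max ({x ∈ P.extremePoints ℝ | ∑ i, h i * x i = α₁}.ncard)
            ({x ∈ Q.extremePoints ℝ | ∑ i, h i * x i = α₂}.ncard) := by
  classical
  obtain ⟨SP, rfl⟩ := hP
  obtain ⟨SQ, rfl⟩ := hQ
  set P : Set (Fin n → ℝ) := convexHull ℝ (SP : Set (Fin n → ℝ)) with hPdef
  set Q : Set (Fin n → ℝ) := convexHull ℝ (SQ : Set (Fin n → ℝ)) with hQdef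
  set EP : Set (Fin n → ℝ) := P.extremePoints ℝ with hEP
  set EQ : Set (Fin n → ℝ) := Q.extremePoints ℝ with hEQ
  have hEPfin : EP.Finite := SP.finite_toSet.subset (extremePoints_convexHull_subset)
  have hEQfin : EQ.Finite := SQ.finite_toSet.subset (extremePoints_convexHull_subset)
  have hPcomp : IsCompact P := SP.finite_toSet.isCompact_convexHull ℝ
  have hQcomp : IsCompact Q := SQ.finite_toSet.isCompact_convexHull ℝ
  have hPconv : Convex ℝ P := convex_convexHull ℝ _
  have hQconv : Convex ℝ Q := convex_convexHull ℝ _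
  have hPE : convexHull ℝ EP = P := by
    have h1 := closure_convexHull_extremePoints hPcomp hPconv
    rwa [(hEPfin.isClosed_convexHull ℝ).closure_eq] at h1
  have hQE : convexHull ℝ EQ = Q := by
    have h1 := closure_convexHull_extremePoints hQcomp hQconv
    rwa [(hEQfin.isClosed_convexHull ℝ).closure_eq] at h1
  set EPf : Finset (Fin n → ℝ) := hEPfin.toFinset with hEPf
  set EQf : Finset (Fin n → ℝ) := hEQfin.toFinset with hEQf
  have hspan : affineSpan ℝ (EP ∪ EQ) = ⊤ := by
    rw [eq_top_iff, ← hdim]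
    apply affineSpan_le.mpr
    rintro x (hx | hx)
    · exact convexHull_subset_affineSpan (EP ∪ EQ) (by
        rw [← hPE] at hx
        exact convexHull_mono Set.subset_union_left hx)
    · exact convexHull_subset_affineSpan (EP ∪ EQ) (by
        rw [← hQE] at hx
        exact convexHull_mono Set.subset_union_right hx)
  -- the space of separation data
  set fstm : ((Fin n → ℝ) × ℝ × ℝ) →ₗ[ℝ] (Fin n → ℝ) := LinearMap.fst ℝ (Fin n → ℝ) (ℝ × ℝ) with hfstm
  set pa : ((Fin n → ℝ) × ℝ × ℝ) →ₗ[ℝ] ℝ :=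
    (LinearMap.fst ℝ ℝ ℝ).comp (LinearMap.snd ℝ (Fin n → ℝ) (ℝ × ℝ)) with hpa
  set pb : ((Fin n → ℝ) × ℝ × ℝ) →ₗ[ℝ] ℝ :=
    (LinearMap.snd ℝ ℝ ℝ).comp (LinearMap.snd ℝ (Fin n → ℝ) (ℝ × ℝ)) with hpb
  set L : ({s // s ∈ EPf} ⊕ {t // t ∈ EQf}) → ((Fin n → ℝ) × ℝ × ℝ) →ₗ[ℝ] ℝ :=
    Sum.elim (fun s => ((dotL n s.1).comp fstm) - pa)
             (fun t => pb - ((dotL n t.1).comp fstm)) with hL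
  set Γ : ((Fin n → ℝ) × ℝ × ℝ) →ₗ[ℝ] ℝ := pb - pa with hΓ
  have happ_inl : ∀ (s : {s // s ∈ EPf}) (v : (Fin n → ℝ) × ℝ × ℝ),
      L (Sum.inl s) v = (∑ i, v.1 i * s.1 i) - v.2.1 := by
    intro s v; simp [hL, hpa, hfstm, dotL, LinearMap.sub_apply, LinearMap.comp_apply, LinearMap.fst_apply, LinearMap.snd_apply]
  have happ_inr : ∀ (t : {t // t ∈ EQf}) (v : (Fin n → ℝ) × ℝ × ℝ),
      L (Sum.inr t) v = v.2.2 - (∑ i, v.1 i * t.1 i) := by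
    intro t v; simp [hL, hpb, hfstm, dotL, LinearMap.sub_apply, LinearMap.comp_apply, LinearMap.fst_apply, LinearMap.snd_apply]
  have happ_Γ : ∀ v : (Fin n → ℝ) × ℝ × ℝ, Γ v = v.2.2 - v.2.1 := by
    intro v; simp [hΓ, hpa, hpb, LinearMap.sub_apply, LinearMap.comp_apply, LinearMap.fst_apply, LinearMap.snd_apply]
  -- trivial common kernel
  have hker : ∀ v : (Fin n → ℝ) × ℝ × ℝ, (∀ i, L i v = 0) → Γ v = 0 → v = 0 := by
    rintro ⟨g, a, b⟩ hLv hΓv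
    rw [happ_Γ] at hΓv
    simp only at hΓv
    have hba : b = a := by linarith
    subst hba
    have hval : ∀ x ∈ EP ∪ EQ, (∑ i, g i * x i) = b := by
      rintro x (hx | hx)
      · have := hLv (Sum.inl ⟨x, hEPfin.mem_toFinset.mpr hx⟩)
        rw [happ_inl] at this
        simp only at this
        have : (∑ i, g i * x i) - b = 0 := this
        linarith
      · have := hLv (Sum.inr ⟨x, hEQfin.mem_toFinset.mpr hx⟩)
        rw [happ_inr] at this
        simp only at this
        have : b - (∑ i, g i * x i) = 0 := this
        linarith
    have hne : (EP ∪ EQ).Nonempty := by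
      by_contra hcon
      rw [Set.not_nonempty_iff_eq_empty] at hcon
      rw [hcon, AffineSubspace.span_empty] at hspan
      exact (hspan ▸ trivial : (0 : Fin n → ℝ) ∈ (⊥ : AffineSubspace ℝ (Fin n → ℝ)))
    obtain ⟨p₀, hp₀⟩ := hne
    set lin : (Fin n → ℝ) →ₗ[ℝ] ℝ := dotL n g with hlin
    have hlinval : ∀ x ∈ EP ∪ EQ, lin x = b := by
      intro x hx
      have h1 := hval x hx
      simp only [dotL, LinearMap.coe_mk, AddHom.coe_mk, hlin]
      rw [← h1]
      exact Finset.sum_congr rfl fun i _ => mul_comm _ _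
    have hkerlin : (⊤ : Submodule ℝ (Fin n → ℝ)) ≤ LinearMap.ker lin := by
      have hdir : vectorSpan ℝ (EP ∪ EQ) = ⊤ := by
        rw [← direction_affineSpan, hspan, AffineSubspace.direction_top]
      rw [← hdir, vectorSpan_def, Submodule.span_le]
      rintro w ⟨x, hx, y, hy, rfl⟩
      simp only [SetLike.mem_coe, LinearMap.mem_ker, vsub_eq_sub, map_sub]
      rw [hlinval x hx, hlinval y hy, sub_self]
    have hlin0 : ∀ x, lin x = 0 := fun x => hkerlin Submodule.mem_top
    have hg : g = 0 := by
      funext i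
      have := hlin0 (Pi.single i 1)
      simp only [dotL, LinearMap.coe_mk, AddHom.coe_mk, hlin] at this
      rwa [Finset.sum_eq_single i (fun j _ hj => by simp [Pi.single_eq_of_ne hj])
        (fun h => absurd (Finset.mem_univ i) h), Pi.single_eq_same, mul_comm, mul_one] at this
    have hb : b = 0 := by
      have h1 := hlinval p₀ hp₀
      rw [hlin0 p₀] at h1
      exact h1.symm
    simp [hg, hb]
  -- initial strictly separating point
  have hdisjoint : Disjoint P Q := Set.disjoint_iff_inter_eq_empty.mpr hdisj
  obtain ⟨f, u, w, hfu, huw, hwf⟩ :=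
    geometric_hahn_banach_compact_closed hPconv hPcomp hQconv hQcomp.isClosed hdisjoint
  set h₀ : Fin n → ℝ := fun i => f (Pi.single i 1) with hh₀
  have hfrep : ∀ x : Fin n → ℝ, f x = ∑ i, x i * h₀ i := by
    intro x
    have hx : x = ∑ i, Pi.single i (x i) := by
      funext j
      simp [Finset.sum_apply, Pi.single_apply]
    conv_lhs => rw [hx]
    rw [map_sum]
    refine Finset.sum_congr rfl fun i _ => ?_
    have : (Pi.single i (x i) : Fin n → ℝ) = (x i) • (Pi.single i (1 : ℝ) : Fin n → ℝ) := by
      funext j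
      simp [Pi.single_apply]
    rw [this, map_smul, smul_eq_mul, hh₀]
  set x₀ : (Fin n → ℝ) × ℝ × ℝ := (h₀, u, w) with hx₀def
  have hx₀ : ∀ i, L i x₀ ≤ 0 := by
    rintro (s | t)
    · rw [happ_inl]
      have hs : s.1 ∈ P := extremePoints_subset (hEPfin.mem_toFinset.mp s.2)
      have := hfu s.1 hs
      rw [hfrep s.1] at this
      have heq : (∑ i, x₀.1 i * s.1 i) = ∑ i, s.1 i * h₀ i := by
        exact Finset.sum_congr rfl fun i _ => mul_comm _ _
      rw [heq]
      simp only [hx₀def]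
      linarith
    · rw [happ_inr]
      have ht : t.1 ∈ Q := extremePoints_subset (hEQfin.mem_toFinset.mp t.2)
      have := hwf t.1 ht
      rw [hfrep t.1] at this
      have heq : (∑ i, x₀.1 i * t.1 i) = ∑ i, t.1 i * h₀ i := by
        exact Finset.sum_congr rfl fun i _ => mul_comm _ _
      rw [heq]
      simp only [hx₀def]
      linarith
  -- run the greedy tightening
  obtain ⟨y, hyle, hyΓ, hytight⟩ :=
    greedy_tight L Γ hker (Fintype.card ({s // s ∈ EPf} ⊕ {t // t ∈ EQf})) x₀ hx₀
      (le_trans (Finset.card_filter_le _ _) (Finset.card_univ.le))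
  set h : Fin n → ℝ := y.1 with hhdef
  set α₁ : ℝ := y.2.1 with hα₁
  set α₂ : ℝ := y.2.2 with hα₂
  have hΓy : α₂ - α₁ = w - u := by
    have := hyΓ
    rw [happ_Γ, happ_Γ] at this
    simpa [hx₀def] using this
  have hlt : α₁ < α₂ := by linarith
  -- half-space containments
  have hPhalf : ∀ x ∈ P, ∑ i, h i * x i ≤ α₁ := by
    have hlinmap : IsLinearMap ℝ (fun x : Fin n → ℝ => ∑ i, h i * x i) := by
      constructor
      · intro a b; simp [mul_add, Finset.sum_add_distrib]
      · intro c a; simp [Finset.mul_sum]; congr 1; funext i; ring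
    have hsub : EP ⊆ {x : Fin n → ℝ | ∑ i, h i * x i ≤ α₁} := by
      intro s hs
      have := hyle (Sum.inl ⟨s, hEPfin.mem_toFinset.mpr hs⟩)
      rw [happ_inl] at this
      have heq : (∑ i, y.1 i * s i) = ∑ i, h i * s i := rfl
      simp only [Set.mem_setOf_eq]
      rw [← heq]
      have h2 : (∑ i, y.1 i * s i) - α₁ ≤ 0 := this
      linarith
    intro x hx
    rw [← hPE] at hx
    exact convexHull_min hsub (convex_halfSpace_le hlinmap α₁) hx
  have hQhalf : ∀ x ∈ Q, α₂ ≤ ∑ i, h i * x i := by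
    have hlinmap : IsLinearMap ℝ (fun x : Fin n → ℝ => ∑ i, h i * x i) := by
      constructor
      · intro a b; simp [mul_add, Finset.sum_add_distrib]
      · intro c a; simp [Finset.mul_sum]; congr 1; funext i; ring
    have hsub : EQ ⊆ {x : Fin n → ℝ | α₂ ≤ ∑ i, h i * x i} := by
      intro t ht
      have := hyle (Sum.inr ⟨t, hEQfin.mem_toFinset.mpr ht⟩)
      rw [happ_inr] at this
      have heq : (∑ i, y.1 i * t i) = ∑ i, h i * t i := rfl
      simp only [Set.mem_setOf_eq]
      rw [← heq]
      have h2 : α₂ - (∑ i, y.1 i * t i) ≤ 0 := this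
      linarith
    intro x hx
    rw [← hQE] at hx
    exact convexHull_min hsub (convex_halfSpace_ge hlinmap α₂) hx
  -- tight sets
  set TP : Finset {s // s ∈ EPf} :=
    Finset.univ.filter (fun s => L (Sum.inl s) y = 0) with hTP
  set TQ : Finset {t // t ∈ EQf} :=
    Finset.univ.filter (fun t => L (Sum.inr t) y = 0) with hTQ
  have hrank : Module.finrank ℝ ((Fin n → ℝ) × ℝ × ℝ) ≤ TP.card + TQ.card + 1 := by
    have := rank_count (fun i : TP => L (Sum.inl i.1)) (fun j : TQ => L (Sum.inr j.1)) Γ ?_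
    · simpa [Fintype.card_coe] using this
    · intro v hvP hvQ hvΓ
      refine hytight v ?_ hvΓ
      rintro (s | t) hi
      · exact hvP ⟨s, Finset.mem_filter.mpr ⟨Finset.mem_univ _, hi⟩⟩
      · exact hvQ ⟨t, Finset.mem_filter.mpr ⟨Finset.mem_univ _, hi⟩⟩
  have hrV : Module.finrank ℝ ((Fin n → ℝ) × ℝ × ℝ) = n + 2 := by
    simp [Module.finrank_prod, Module.finrank_pi]
  have hsum : n + 1 ≤ TP.card + TQ.card := by
    rw [hrV] at hrank
    omega
  -- cardinality bounds on the face vertex sets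
  have hcardP : TP.card ≤ ({x ∈ EP | ∑ i, h i * x i = α₁}).ncard := by
    set A : Set (Fin n → ℝ) := {x ∈ EP | ∑ i, h i * x i = α₁} with hA
    have hAfin : A.Finite := hEPfin.subset (fun x hx => hx.1)
    set img : Finset (Fin n → ℝ) := TP.image (fun s => s.1) with himg
    have hinj : Function.Injective (fun s : {s // s ∈ EPf} => s.1) := Subtype.val_injective
    have hcard : img.card = TP.card := Finset.card_image_of_injective _ hinj
    have hsub : (img : Set (Fin n → ℝ)) ⊆ A := by
      intro x hx
      simp only [himg, Finset.coe_image, Set.mem_image, Finset.mem_coe] at hx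
      obtain ⟨s, hsTP, rfl⟩ := hx
      have hs0 : L (Sum.inl s) y = 0 := (Finset.mem_filter.mp hsTP).2
      rw [happ_inl] at hs0
      refine ⟨hEPfin.mem_toFinset.mp s.2, ?_⟩
      have heq : (∑ i, y.1 i * s.1 i) = ∑ i, h i * s.1 i := rfl
      have : (∑ i, y.1 i * s.1 i) - α₁ = 0 := hs0
      rw [heq] at this
      linarith
    calc TP.card = (img : Set (Fin n → ℝ)).ncard := by rw [Set.ncard_coe_finset, hcard]
      _ ≤ A.ncard := Set.ncard_le_ncard hsub hAfin
  have hcardQ : TQ.card ≤ ({x ∈ EQ | ∑ i, h i * x i = α₂}).ncard := by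
    set A : Set (Fin n → ℝ) := {x ∈ EQ | ∑ i, h i * x i = α₂} with hA
    have hAfin : A.Finite := hEQfin.subset (fun x hx => hx.1)
    set img : Finset (Fin n → ℝ) := TQ.image (fun t => t.1) with himg
    have hinj : Function.Injective (fun t : {t // t ∈ EQf} => t.1) := Subtype.val_injective
    have hcard : img.card = TQ.card := Finset.card_image_of_injective _ hinj
    have hsub : (img : Set (Fin n → ℝ)) ⊆ A := by
      intro x hx
      simp only [himg, Finset.coe_image, Set.mem_image, Finset.mem_coe] at hx
      obtain ⟨t, htTQ, rfl⟩ := hx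
      have ht0 : L (Sum.inr t) y = 0 := (Finset.mem_filter.mp htTQ).2
      rw [happ_inr] at ht0
      refine ⟨hEQfin.mem_toFinset.mp t.2, ?_⟩
      have heq : (∑ i, y.1 i * t.1 i) = ∑ i, h i * t.1 i := rfl
      have : α₂ - (∑ i, y.1 i * t.1 i) = 0 := ht0
      rw [heq] at this
      linarith
    calc TQ.card = (img : Set (Fin n → ℝ)).ncard := by rw [Set.ncard_coe_finset, hcard]
      _ ≤ A.ncard := Set.ncard_le_ncard hsub hAfin
  refine ⟨h, α₁, α₂, hlt, hPhalf, hQhalf, ?_⟩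
  set a : ℕ := ({x ∈ EP | ∑ i, h i * x i = α₁}).ncard with ha
  set b : ℕ := ({x ∈ EQ | ∑ i, h i * x i = α₂}).ncard with hb
  have h1 : a ≤ max a b := le_max_left a b
  have h2 : b ≤ max a b := le_max_right a b
  obtain ⟨c, d, h3, h4, h5⟩ : ∃ c d : ℕ, c ≤ a ∧ d ≤ b ∧ n + 1 ≤ c + d :=
    ⟨TP.card, TQ.card, hcardP, hcardQ, hsum⟩
  clear_value a b
  generalize hm : max a b = m at h1 h2 ⊢
  clear * - h1 h2 h3 h4 h5
  omega
end

section
/- For every n ≥ 1, conv({x ∈ [0,1]^n : (1/2)·(x₁ + x₂ + … + x_n) ∈ ℤ}) = conv({x ∈ {0,1}^n : x₁ + … + x_n is even}); in particular, the set on the left is an integral polytope, equal to the n-dimensional even parity polytope. -/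
open Set

namespace ParityAux

variable {n : ℕ}

/-- fractional coordinates of `x` -/
noncomputable def frac (x : Fin n → ℝ) : Finset (Fin n) :=
  Finset.univ.filter (fun i => x i ≠ 0 ∧ x i ≠ 1)

lemma mem_frac {x : Fin n → ℝ} {i : Fin n} :
    i ∈ frac x ↔ x i ≠ 0 ∧ x i ≠ 1 := by
  simp [frac]

lemma sum_int {x : Fin n → ℝ} (s : Finset (Fin n))
    (h : ∀ k ∈ s, x k = 0 ∨ x k = 1) : ∃ w : ℤ, ∑ k ∈ s, x k = (w : ℝ) := by
  classical
  induction s using Finset.induction with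
  | empty => exact ⟨0, by simp⟩
  | @insert a s' hns ih =>
    obtain ⟨w, hw⟩ := ih (fun k hk => h k (Finset.mem_insert_of_mem hk))
    rcases h a (Finset.mem_insert_self a s') with h0 | h1
    · exact ⟨w, by rw [Finset.sum_insert hns, h0, hw]; simp⟩
    · exact ⟨w + 1, by rw [Finset.sum_insert hns, h1, hw]; push_cast; ring⟩

/-- move `x` by `t` in direction `e_i - e_j` -/
def mv (x : Fin n → ℝ) (i j : Fin n) (t : ℝ) : Fin n → ℝ :=
  fun k => if k = i then x k + t else if k = j then x k - t else x k

lemma mv_apply_i (x : Fin n → ℝ) {i j : Fin n} (t : ℝ) :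
    mv x i j t i = x i + t := by simp [mv]

lemma mv_apply_j (x : Fin n → ℝ) {i j : Fin n} (hij : i ≠ j) (t : ℝ) :
    mv x i j t j = x j - t := by simp [mv, hij.symm]

lemma mv_apply_other (x : Fin n → ℝ) {i j k : Fin n} (hki : k ≠ i) (hkj : k ≠ j) (t : ℝ) :
    mv x i j t k = x k := by simp [mv, hki, hkj]

lemma mv_sum (x : Fin n → ℝ) {i j : Fin n} (hij : i ≠ j) (t : ℝ) :
    ∑ k, mv x i j t k = ∑ k, x k := by
  classical
  have h : ∀ k ∈ Finset.univ, mv x i j t k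
      = x k + ((if k = i then t else 0) + (if k = j then -t else 0)) := by
    intro k _
    by_cases hki : k = i
    · subst hki
      simp [mv, hij, if_neg hij]
    · by_cases hkj : k = j
      · subst hkj
        simp [mv, hki]
        ring
      · simp [mv, hki, hkj]
  rw [Finset.sum_congr rfl h]
  simp [Finset.sum_add_distrib]

lemma mv_bounds (x : Fin n → ℝ) {i j : Fin n} (hij : i ≠ j) {t : ℝ}
    (ht0 : 0 ≤ t) (hti : t ≤ 1 - x i) (htj : t ≤ x j)
    (hb : ∀ k, 0 ≤ x k ∧ x k ≤ 1) :
    ∀ k, 0 ≤ mv x i j t k ∧ mv x i j t k ≤ 1 := by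
  intro k
  by_cases hki : k = i
  · subst hki
    rw [mv_apply_i]
    constructor
    · linarith [(hb k).1]
    · linarith
  · by_cases hkj : k = j
    · subst hkj
      rw [mv_apply_j x hij]
      constructor
      · linarith
      · linarith [(hb k).2]
    · rw [mv_apply_other x hki hkj]
      exact hb k

lemma mv_frac (x : Fin n → ℝ) {i j : Fin n} (hij : i ≠ j) {t : ℝ}
    (hi : i ∈ frac x) (hj : j ∈ frac x)
    (hbd : x i + t = 1 ∨ x j - t = 0) :
    frac (mv x i j t) ⊂ frac x := by
  classical
  have hsub : frac (mv x i j t) ⊆ frac x := by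
    intro k hk
    by_cases hki : k = i
    · subst hki; exact hi
    · by_cases hkj : k = j
      · subst hkj; exact hj
      · rw [mem_frac] at hk ⊢
        rwa [mv_apply_other x hki hkj] at hk
  rcases hbd with h1 | h0
  · refine ⟨hsub, fun habs => ?_⟩
    have := habs hi
    rw [mem_frac, mv_apply_i, h1] at this
    exact this.2 rfl
  · refine ⟨hsub, fun habs => ?_⟩
    have := habs hj
    rw [mem_frac, mv_apply_j x hij, h0] at this
    exact this.1 rfl

lemma key (n : ℕ) : ∀ k (x : Fin n → ℝ), (∀ i, 0 ≤ x i ∧ x i ≤ 1) →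
    (∃ z : ℤ, ∑ i, x i = 2 * (z : ℝ)) → (frac x).card ≤ k →
    x ∈ convexHull ℝ {y : Fin n → ℝ |
        (∀ i, y i = 0 ∨ y i = 1) ∧ ∃ z : ℤ, ∑ i, y i = 2 * (z : ℝ)} := by
  classical
  intro k
  induction k with
  | zero =>
    intro x hb hz hc
    apply subset_convexHull
    have hemp : frac x = ∅ := Finset.card_eq_zero.mp (Nat.le_zero.mp hc)
    refine ⟨fun i => ?_, hz⟩
    by_contra h
    push_neg at h
    have : i ∈ frac x := mem_frac.mpr ⟨h.1, h.2⟩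
    rw [hemp] at this
    exact absurd this (Finset.notMem_empty i)
  | succ k ih =>
    intro x hb hz hc
    by_cases hemp : frac x = ∅
    · apply subset_convexHull
      refine ⟨fun i => ?_, hz⟩
      by_contra h
      push_neg at h
      have : i ∈ frac x := mem_frac.mpr ⟨h.1, h.2⟩
      rw [hemp] at this
      exact absurd this (Finset.notMem_empty i)
    · obtain ⟨i, hi⟩ := Finset.nonempty_of_ne_empty hemp
      -- there is another fractional coordinate
      have hij' : ∃ j ∈ frac x, j ≠ i := by
        by_contra h
        push_neg at h
        obtain ⟨z, hzx⟩ := hz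
        have hrest : ∀ m ∈ Finset.univ.erase i, x m = 0 ∨ x m = 1 := by
          intro m hm
          have hmi : m ≠ i := (Finset.mem_erase.mp hm).1
          by_contra hmc
          push_neg at hmc
          exact hmi (h m (mem_frac.mpr ⟨hmc.1, hmc.2⟩))
        obtain ⟨w, hw⟩ := sum_int (Finset.univ.erase i) hrest
        have hsum : x i + ∑ m ∈ Finset.univ.erase i, x m = ∑ m, x m :=
          Finset.add_sum_erase _ _ (Finset.mem_univ i)
        have hxi : x i = ((2 * z - w : ℤ) : ℝ) := by
          push_cast
          rw [hw] at hsum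
          linarith
        have h0 : x i ≠ 0 := (mem_frac.mp hi).1
        have h1 : x i ≠ 1 := (mem_frac.mp hi).2
        have hlt0 : (0 : ℝ) < ((2 * z - w : ℤ) : ℝ) := by
          rw [← hxi]; exact lt_of_le_of_ne (hb i).1 (Ne.symm h0)
        have hlt1 : ((2 * z - w : ℤ) : ℝ) < 1 := by
          rw [← hxi]; exact lt_of_le_of_ne (hb i).2 h1
        have h0' : (0 : ℤ) < 2 * z - w := by exact_mod_cast hlt0
        have h1' : (2 * z - w : ℤ) < 1 := by exact_mod_cast hlt1
        omega
      obtain ⟨j, hj, hjine⟩ := hij'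
      have hij : i ≠ j := Ne.symm hjine
      have hi0 : x i ≠ 0 := (mem_frac.mp hi).1
      have hi1 : x i ≠ 1 := (mem_frac.mp hi).2
      have hj0 : x j ≠ 0 := (mem_frac.mp hj).1
      have hj1 : x j ≠ 1 := (mem_frac.mp hj).2
      have hxi0 : 0 < x i := lt_of_le_of_ne (hb i).1 (Ne.symm hi0)
      have hxi1 : x i < 1 := lt_of_le_of_ne (hb i).2 hi1
      have hxj0 : 0 < x j := lt_of_le_of_ne (hb j).1 (Ne.symm hj0)
      have hxj1 : x j < 1 := lt_of_le_of_ne (hb j).2 hj1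
      set tp : ℝ := min (1 - x i) (x j) with htp
      set tm : ℝ := min (1 - x j) (x i) with htm
      have htp0 : 0 < tp := lt_min (by linarith) hxj0
      have htm0 : 0 < tm := lt_min (by linarith) hxi0
      set y := mv x i j tp with hy
      set w := mv x j i tm with hwdef
      -- y bounds, sum, frac
      have hyb : ∀ k, 0 ≤ y k ∧ y k ≤ 1 :=
        mv_bounds x hij (le_of_lt htp0) (min_le_left _ _) (min_le_right _ _) hb
      have hwb : ∀ k, 0 ≤ w k ∧ w k ≤ 1 :=
        mv_bounds x hij.symm (le_of_lt htm0) (min_le_left _ _) (min_le_right _ _) hb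
      have hys : ∑ m, y m = ∑ m, x m := mv_sum x hij tp
      have hws : ∑ m, w m = ∑ m, x m := mv_sum x hij.symm tm
      have hyf : frac y ⊂ frac x := by
        apply mv_frac x hij hi hj
        rcases min_cases (1 - x i) (x j) with ⟨h, _⟩ | ⟨h, _⟩
        · left; rw [htp, h]; ring
        · right; rw [htp, h]; ring
      have hwf : frac w ⊂ frac x := by
        apply mv_frac x hij.symm hj hi
        rcases min_cases (1 - x j) (x i) with ⟨h, _⟩ | ⟨h, _⟩
        · left; rw [htm, h]; ring
        · right; rw [htm, h]; ring
      have hycard : (frac y).card ≤ k := by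
        have := Finset.card_lt_card hyf
        omega
      have hwcard : (frac w).card ≤ k := by
        have := Finset.card_lt_card hwf
        omega
      obtain ⟨z, hzx⟩ := hz
      have hymem := ih y hyb ⟨z, by rw [hys]; exact hzx⟩ hycard
      have hwmem := ih w hwb ⟨z, by rw [hws]; exact hzx⟩ hwcard
      -- x is a convex combination of y and w
      set s : ℝ := tp + tm with hs
      have hs0 : 0 < s := by positivity
      have ha : (0:ℝ) ≤ tm / s := by positivity
      have hbb : (0:ℝ) ≤ tp / s := by positivity
      have hab : tm / s + tp / s = 1 := by rw [← add_div, hs]; field_simp; ring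
      have hcomb : x = (tm / s) • y + (tp / s) • w := by
        funext m
        simp only [Pi.add_apply, Pi.smul_apply, smul_eq_mul]
        by_cases hmi : m = i
        · subst hmi
          rw [hy, hwdef, mv_apply_i, mv_apply_j x hij.symm]
          field_simp
          ring
        · by_cases hmj : m = j
          · subst hmj
            rw [hy, hwdef, mv_apply_j x hij, mv_apply_i]
            field_simp
            ring
          · rw [hy, hwdef, mv_apply_other x hmi hmj, mv_apply_other x hmj hmi]
            field_simp
            rw [hs]; ring
      rw [hcomb]
      exact (convex_convexHull ℝ _) hymem hwmem ha hbb hab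

end ParityAux

/-- **Mixed integer description of the parity polytope.** For every `n ≥ 1`,
`conv {x ∈ [0,1]ⁿ : (1/2)·∑ᵢ xᵢ ∈ ℤ}` equals the `n`-dimensional even parity polytope,
i.e. the convex hull of the 0-1 vectors whose coordinate sum is even; in particular the
left-hand set is an integral polytope. -/
theorem parity_polytope_mixed_integer_description
    (n : ℕ) (hn : 1 ≤ n) :
    convexHull ℝ {x : Fin n → ℝ |
        (∀ i, 0 ≤ x i ∧ x i ≤ 1) ∧
        ∃ z : ℤ, (1 / 2 : ℝ) * ∑ i, x i = (z : ℝ)}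
      = convexHull ℝ {x : Fin n → ℝ |
        (∀ i, x i = 0 ∨ x i = 1) ∧
        ∃ z : ℤ, ∑ i, x i = 2 * (z : ℝ)} := by
  apply le_antisymm
  · apply convexHull_min _ (convex_convexHull ℝ _)
    intro x hx
    obtain ⟨hb, z, hz⟩ := hx
    exact ParityAux.key n (ParityAux.frac x).card x hb ⟨z, by linarith⟩ le_rfl
  · apply convexHull_mono
    intro x hx
    obtain ⟨h01, z, hz⟩ := hx
    refine ⟨fun i => ?_, ⟨z, by linarith⟩⟩
    rcases h01 i with h | h <;> simp [h]
end
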